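/- arXiv:0812.2841 — 10 statements merged into one kernel-verified Lean document; each statement's English description precedes it below -/
import Mathlib

section
/- Let m be a natural number with m > 2. Then m is prime if and only if ∏_{j=1}^{m-1} (2^j + 1) ≡ 1 (mod 2^m − 1). -/
open Finset

/-- `n ∣ 2^x - 1` iff `2^x = 1` in `ZMod n`. -/
lemma dvd_two_pow_sub_one_iff {n x : ℕ} : n ∣ 2 ^ x - 1 ↔ (2 : ZMod n) ^ x = 1 := by
  have h1 : (1 : ℕ) ≤ 2 ^ x := Nat.one_le_two_pow
  rw [← Nat.modEq_iff_dvd' h1, Nat.ModEq.comm, ← ZMod.natCast_eq_natCast_iff]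
  push_cast
  rfl

/-- If `a` and `b` are coprime then `2^a - 1` and `2^b - 1` are coprime. -/
lemma coprime_two_pow_sub_one {a b : ℕ} (h : Nat.Coprime a b) :
    Nat.Coprime (2 ^ a - 1) (2 ^ b - 1) := by
  set g := Nat.gcd (2 ^ a - 1) (2 ^ b - 1) with hg
  have ha : (2 : ZMod g) ^ a = 1 := dvd_two_pow_sub_one_iff.mp (Nat.gcd_dvd_left _ _)
  have hb : (2 : ZMod g) ^ b = 1 := dvd_two_pow_sub_one_iff.mp (Nat.gcd_dvd_right _ _)
  have hd : orderOf (2 : ZMod g) ∣ Nat.gcd a b :=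
    Nat.dvd_gcd (orderOf_dvd_of_pow_eq_one ha) (orderOf_dvd_of_pow_eq_one hb)
  rw [h] at hd
  have h2 : (2 : ZMod g) ^ 1 = 1 := orderOf_dvd_iff_pow_eq_one.mp hd
  have : g ∣ 2 ^ 1 - 1 := dvd_two_pow_sub_one_iff.mpr h2
  simpa [Nat.Coprime, ← hg] using this

/-- periodic product over `range (e*k)`. -/
lemma prod_range_mul_of_periodic {M : Type*} [CommMonoid M] (F : ℕ → M) (e k : ℕ)
    (hF : ∀ j, F (j + e) = F j) :
    ∏ j ∈ range (e * k), F j = (∏ j ∈ range e, F j) ^ k := by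
  have hF' : ∀ i t, F (i + e * t) = F i := by
    intro i t
    induction t with
    | zero => simp
    | succ t ih => rw [Nat.mul_succ, ← Nat.add_assoc, hF, ih]
  induction k with
  | zero => simp
  | succ k ih =>
    rw [Nat.mul_succ, Finset.prod_range_add, ih, pow_succ]
    congr 1
    refine Finset.prod_congr rfl fun i _ => ?_
    rw [Nat.add_comm (e*k) i, hF']

lemma pow_eq_pow_mod_of_pow_eq_one {M : Type*} [Monoid M] {x : M} {e : ℕ} (h : x ^ e = 1)
    (a : ℕ) : x ^ a = x ^ (a % e) := by
  conv_lhs => rw [← Nat.div_add_mod a e]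
  rw [pow_add, pow_mul, h, one_pow, one_mul]

/-- doubling permutes `Icc 1 (e-1)` mod odd `e`. -/
lemma prod_double_mod {M : Type*} [CommMonoid M] (f : ℕ → M) {e : ℕ} (he : Odd e) :
    ∏ j ∈ Icc 1 (e - 1), f (2 * j % e) = ∏ j ∈ Icc 1 (e - 1), f j := by
  have he2 : ¬ (2 ∣ e) := by
    rw [Nat.odd_iff] at he; omega
  have hcop : Nat.Coprime e 2 := Nat.coprime_comm.mp (Nat.prime_two.coprime_iff_not_dvd.mpr he2)
  have hmem : ∀ c : ℕ, ¬ e ∣ c → c % e ∈ Icc 1 (e - 1) := by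
    intro c hc
    have h0 : e ≠ 0 := by rintro rfl; exact he2 ⟨0, rfl⟩
    have hlt : c % e < e := Nat.mod_lt _ (Nat.pos_of_ne_zero h0)
    have hne : c % e ≠ 0 := fun h => hc ((Nat.dvd_iff_mod_eq_zero).mpr h)
    simp only [Finset.mem_Icc]; omega
  set h : ℕ := (e + 1) / 2 with hh
  have h2h : 2 * h = e + 1 := by
    have : 2 ∣ e + 1 := by rw [Nat.odd_iff] at he; omega
    omega
  have key : ∀ j ∈ Icc 1 (e - 1), ¬ e ∣ 2 * j := by
    intro j hj hdvd
    have hje : j < e ∧ 1 ≤ j := by simp [Finset.mem_Icc] at hj; omega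
    have : e ∣ j := (Nat.Coprime.dvd_of_dvd_mul_left hcop hdvd)
    have := Nat.le_of_dvd (by omega) this
    omega
  have key' : ∀ j ∈ Icc 1 (e - 1), ¬ e ∣ h * j := by
    intro j hj hdvd
    have hje : j < e ∧ 1 ≤ j := by simp [Finset.mem_Icc] at hj; omega
    have h1 : e ∣ 2 * (h * j) := Dvd.dvd.mul_left hdvd 2
    rw [← Nat.mul_assoc, h2h] at h1
    have h2 : e ∣ e * j := Dvd.intro j rfl
    have h3 : e ∣ j := by
      have heq : (e + 1) * j = e * j + j := by ring
      exact (Nat.dvd_add_right h2).mp (heq ▸ h1)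
    have := Nat.le_of_dvd (by omega) h3
    omega
  refine Finset.prod_bij' (fun j _ => 2 * j % e) (fun j _ => h * j % e)
    (fun j hj => hmem _ (key j hj)) (fun j hj => hmem _ (key' j hj)) ?_ ?_ ?_
  · intro j hj
    have hje : j < e ∧ 1 ≤ j := by simp only [Finset.mem_Icc] at hj; omega
    have h5 : h * (2 * j % e) % e = h * (2 * j) % e := Nat.ModEq.mul_left h (Nat.mod_modEq (2*j) e)
    show h * (2 * j % e) % e = j
    rw [h5, ← Nat.mul_assoc, Nat.mul_comm h 2, h2h]
    have h6 : (e + 1) * j = j + e * j := by ring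
    rw [h6, Nat.add_mul_mod_self_left, Nat.mod_eq_of_lt (by omega)]
  · intro j hj
    have hje : j < e ∧ 1 ≤ j := by simp only [Finset.mem_Icc] at hj; omega
    have h5 : 2 * (h * j % e) % e = 2 * (h * j) % e := Nat.ModEq.mul_left 2 (Nat.mod_modEq (h*j) e)
    show 2 * (h * j % e) % e = j
    rw [h5, ← Nat.mul_assoc, h2h]
    have h6 : (e + 1) * j = j + e * j := by ring
    rw [h6, Nat.add_mul_mod_self_left, Nat.mod_eq_of_lt (by omega)]
  · intro j hj
    rfl

/-- Key identity: for `x^e = 1`, `e` odd, in a commutative ring. -/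
lemma key_prod_identity {R : Type*} [CommRing R] {x : R} {e : ℕ} (he : Odd e)
    (hx : x ^ e = 1) :
    (∏ j ∈ Icc 1 (e - 1), (x ^ j + 1)) * (∏ j ∈ Icc 1 (e - 1), (x ^ j - 1))
      = ∏ j ∈ Icc 1 (e - 1), (x ^ j - 1) := by
  rw [← Finset.prod_mul_distrib]
  have h1 : ∀ j ∈ Icc 1 (e-1), (x ^ j + 1) * (x ^ j - 1) = x ^ (2 * j % e) - 1 := by
    intro j _
    rw [← pow_eq_pow_mod_of_pow_eq_one hx (2 * j), Nat.mul_comm 2 j, pow_mul]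
    ring
  rw [Finset.prod_congr rfl h1]
  exact prod_double_mod (fun j => x ^ j - 1) he

/-- In `ZMod q` (`q` prime dividing `2^m-1`, `m` odd), if the product is `1 mod 2^m-1`
then `e ∣ m/e - 1` for `e` the order of `2`. -/
lemma constraint_lemma {m q : ℕ} (hm2 : 2 < m) (hmo : Odd m) (hq : q.Prime)
    (hqd : q ∣ 2 ^ m - 1)
    (hP : (∏ j ∈ Icc 1 (m - 1), (2 ^ j + 1)) ≡ 1 [MOD 2 ^ m - 1]) :
    orderOf (2 : ZMod q) ∣ m / orderOf (2 : ZMod q) - 1 := by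
  haveI : Fact q.Prime := ⟨hq⟩
  have hNodd : Odd (2 ^ m - 1) := by
    have h1 : 2 ∣ 2 ^ m := dvd_pow_self 2 (by omega)
    have h2 : 2 ≤ 2 ^ m := Nat.one_lt_two_pow_iff.mpr (by omega)
    rw [Nat.odd_iff]; omega
  have hq2 : q ≠ 2 := by
    rintro rfl
    rw [Nat.odd_iff] at hNodd
    obtain ⟨c, hc⟩ := hqd
    omega
  have h20 : (2 : ZMod q) ≠ 0 := by
    have : ((2 : ℕ) : ZMod q) ≠ 0 := by
      rw [Ne, ZMod.natCast_eq_zero_iff]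
      exact fun hdvd => hq2 ((Nat.prime_dvd_prime_iff_eq hq Nat.prime_two).mp hdvd)
    simpa using this
  set g : ZMod q := 2 with hgdef
  have hg : g ^ m = 1 := dvd_two_pow_sub_one_iff.mp hqd
  set e := orderOf g with hedef
  have hedvd : e ∣ m := orderOf_dvd_of_pow_eq_one hg
  have hepos : 0 < e :=
    (isOfFinOrder_iff_pow_eq_one.mpr ⟨m, by omega, hg⟩).orderOf_pos
  have heodd : Odd e := by
    obtain ⟨c, hc⟩ := hedvd
    rw [Nat.odd_iff] at hmo ⊢
    have : e % 2 = 0 ∨ e % 2 = 1 := by omega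
    rcases this with h | h
    · exfalso
      obtain ⟨t, ht⟩ : 2 ∣ e := by omega
      have h4 : e * c = 2 * (t * c) := by rw [ht]; ring
      rw [hc] at hmo
      omega
    · exact h
  set k := m / e with hkdef
  have hek : e * k = m := Nat.mul_div_cancel' hedvd
  have hkpos : 0 < k := by
    rcases Nat.eq_zero_or_pos k with h | h
    · rw [h, Nat.mul_zero] at hek; omega
    · exact h
  -- step 1 : ∏_{j=1}^{e-1} (g^j + 1) = 1
  have hBne : (∏ j ∈ Icc 1 (e - 1), (g ^ j - 1)) ≠ 0 := by
    rw [Finset.prod_ne_zero_iff]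
    intro j hj
    simp only [Finset.mem_Icc] at hj
    intro h0
    have : g ^ j = 1 := by
      have := sub_eq_zero.mp h0; simpa using this
    have := Nat.le_of_dvd (by omega) (orderOf_dvd_of_pow_eq_one this)
    omega
  have hA1 : (∏ j ∈ Icc 1 (e - 1), (g ^ j + 1)) = 1 := by
    have := key_prod_identity heodd (pow_orderOf_eq_one g)
    have h2 := mul_right_cancel₀ hBne (this.trans (one_mul _).symm)
    exact h2
  -- step 2 : ∏_{j ∈ range e} (g^j + 1) = 2
  have hIcoIcc : ∀ n : ℕ, 0 < n → Finset.Ico 1 n = Finset.Icc 1 (n - 1) := by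
    intro n hn
    rw [← Finset.Ico_add_one_right_eq_Icc]
    congr 1
    omega
  have hrange : ∀ n : ℕ, 0 < n →
      (∏ j ∈ range n, (g ^ j + 1)) = 2 * ∏ j ∈ Icc 1 (n - 1), (g ^ j + 1) := by
    intro n hn
    rw [Finset.range_eq_Ico, Finset.prod_eq_prod_Ico_succ_bot hn, ← hIcoIcc n hn]
    norm_num
  have hre : (∏ j ∈ range e, (g ^ j + 1)) = 2 := by
    rw [hrange e hepos, hA1, mul_one]
  -- step 3 : ∏_{j ∈ range m} (g^j + 1) = 2 ^ k
  have hrm : (∏ j ∈ range m, (g ^ j + 1)) = 2 ^ k := by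
    rw [← hek, prod_range_mul_of_periodic _ e k
      (fun j => by rw [pow_add, pow_orderOf_eq_one, mul_one]), hre]
  -- step 4 : cast hypothesis
  have hPq : (∏ j ∈ Icc 1 (m - 1), (2 ^ j + 1) : ℕ) ≡ 1 [MOD q] := hP.of_dvd hqd
  have hPcast : (∏ j ∈ Icc 1 (m - 1), (g ^ j + 1)) = 1 := by
    have := (ZMod.natCast_eq_natCast_iff _ _ _).mpr hPq
    push_cast at this
    rw [hgdef]
    exact this
  have h2k : (2 : ZMod q) ^ k = 2 := by
    rw [← hrm, hrange m (by omega), hPcast, mul_one]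
  have h2k1 : g ^ (k - 1) = 1 := by
    have hk1 : k - 1 + 1 = k := by omega
    have : (2 : ZMod q) ^ (k - 1) * 2 = 2 := by
      rw [← pow_succ, hk1, h2k]
    have h2 := mul_right_cancel₀ h20 (this.trans (one_mul (2 : ZMod q)).symm)
    rw [hgdef]; exact h2
  exact orderOf_dvd_of_pow_eq_one h2k1

/-- there is a prime `q` such that `2` has order exactly `p` mod `q`, for `p` an odd prime. -/
lemma exists_order_prime {p : ℕ} (hp : p.Prime) (hp2 : p ≠ 2) :
    ∃ q : ℕ, q.Prime ∧ q ∣ 2 ^ p - 1 ∧ orderOf (2 : ZMod q) = p := by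
  have hp3 : 3 ≤ p := by
    have := hp.two_le; omega
  have hN1 : 1 < 2 ^ p - 1 := by
    have : 2 ^ 3 ≤ 2 ^ p := Nat.pow_le_pow_right (by omega) hp3
    omega
  set q := Nat.minFac (2 ^ p - 1) with hqdef
  have hq : q.Prime := Nat.minFac_prime (by omega)
  have hqd : q ∣ 2 ^ p - 1 := Nat.minFac_dvd _
  refine ⟨q, hq, hqd, ?_⟩
  have hg : (2 : ZMod q) ^ p = 1 := dvd_two_pow_sub_one_iff.mp hqd
  have hedvd : orderOf (2 : ZMod q) ∣ p := orderOf_dvd_of_pow_eq_one hg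
  rcases (Nat.Prime.eq_one_or_self_of_dvd hp _ hedvd) with h | h
  · exfalso
    have h1 : (2 : ZMod q) ^ 1 = 1 := by
      have h' := pow_orderOf_eq_one (2 : ZMod q); rwa [h] at h'
    have := Nat.le_of_dvd (by omega) (dvd_two_pow_sub_one_iff.mpr h1)
    have := hq.two_le
    omega
  · exact h

/-- divisors of a product of two distinct primes. -/
lemma dvd_mul_prime_cases {u v d : ℕ} (hu : u.Prime) (hv : v.Prime) (hne : u ≠ v)
    (h : d ∣ u * v) : d = 1 ∨ d = u ∨ d = v ∨ d = u * v := by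
  by_cases hud : u ∣ d
  · obtain ⟨d', rfl⟩ := hud
    have hd' : d' ∣ v := (mul_dvd_mul_iff_left (by exact_mod_cast hu.pos.ne')).mp h
    rcases (Nat.Prime.eq_one_or_self_of_dvd hv _ hd') with h1 | h1
    · right; left; rw [h1, Nat.mul_one]
    · right; right; right; rw [h1]
  · have hcop : Nat.Coprime d u := (hu.coprime_iff_not_dvd.mpr hud).symm
    have hdv : d ∣ v := by
      rw [Nat.mul_comm] at h
      exact hcop.dvd_of_dvd_mul_right h
    rcases (Nat.Prime.eq_one_or_self_of_dvd hv _ hdv) with h1 | h1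
    · left; exact h1
    · right; right; left; exact h1

/-- key geometric sum fact in ℕ. -/
lemma geom_sum_nat (a n : ℕ) (ha : 1 ≤ a) :
    (a - 1) * (∑ i ∈ range n, a ^ i) = a ^ n - 1 := by
  have han : 1 ≤ a ^ n := Nat.one_le_pow _ _ (by omega)
  have := geom_sum_mul (a : ℤ) n
  have hcast : ((a - 1) * (∑ i ∈ range n, a ^ i) : ℕ) = ((a ^ n - 1 : ℕ) : ℤ) := by
    push_cast [Nat.cast_sub ha, Nat.cast_sub han]
    rw [mul_comm]
    exact this
  exact_mod_cast hcast

set_option maxHeartbeats 2000000 in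
/-- there is a prime `q` such that `2` has order exactly `u*v` mod `q`,
for `u < v` odd primes. -/
lemma exists_order_mul {u v : ℕ} (hu : u.Prime) (hv : v.Prime) (hu2 : 2 < u)
    (huv : u < v) : ∃ q : ℕ, q.Prime ∧ q ∣ 2 ^ (u * v) - 1 ∧
      orderOf (2 : ZMod q) = u * v := by
  have hv5 : 5 ≤ v := by
    rcases Nat.lt_or_ge v 5 with h | h
    · exfalso
      have := hv.two_le
      interval_cases v
      · omega
      · omega
      · exact absurd hv (by decide)
    · exact h
  have hune : u ≠ v := by omega
  set A := 2 ^ u - 1 with hA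
  set B := 2 ^ v - 1 with hB
  set N := 2 ^ (u * v) - 1 with hN
  have h2u : 1 ≤ 2 ^ u := Nat.one_le_two_pow
  have h2v : 1 ≤ 2 ^ v := Nat.one_le_two_pow
  have h2uv : 1 ≤ 2 ^ (u * v) := Nat.one_le_two_pow
  have hAN : A ∣ N := by
    have := Nat.sub_dvd_pow_sub_pow (2 ^ u) 1 v
    rwa [← pow_mul, one_pow] at this
  have hBN : B ∣ N := by
    have := Nat.sub_dvd_pow_sub_pow (2 ^ v) 1 u
    rwa [← pow_mul, one_pow, Nat.mul_comm v u] at this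
  have hcopAB : Nat.Coprime A B :=
    coprime_two_pow_sub_one ((Nat.coprime_primes hu hv).mpr hune)
  have hABN : A * B ∣ N := hcopAB.mul_dvd_of_dvd_of_dvd hAN hBN
  set C := N / (A * B) with hC
  have hCN : C * (A * B) = N := Nat.div_mul_cancel hABN
  set S : ℕ := ∑ i ∈ range v, (2 ^ u) ^ i with hS
  have hAS : A * S = N := by
    rw [hA, hS, hN, geom_sum_nat _ _ (by omega), ← pow_mul]
  set S' : ℕ := ∑ i ∈ range u, (2 ^ v) ^ i with hS'
  have hBS' : B * S' = N := by
    rw [hB, hS', hN, geom_sum_nat _ _ (by omega), ← pow_mul, Nat.mul_comm v u]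
  have hApos : 0 < A := by
    have : 2 ^ 1 ≤ 2 ^ u := Nat.pow_le_pow_right (by omega) (by omega)
    omega
  have hBpos : 0 < B := by
    have : 2 ^ 1 ≤ 2 ^ v := Nat.pow_le_pow_right (by omega) (by omega)
    omega
  have hCB : C * B = S := by
    have h1 : A * (C * B) = A * S := by
      rw [hAS, ← hCN]; ring
    exact Nat.eq_of_mul_eq_mul_left hApos h1
  have hCA : C * A = S' := by
    have h1 : B * (C * A) = B * S' := by
      rw [hBS', ← hCN]; ring
    exact Nat.eq_of_mul_eq_mul_left hBpos h1
  -- C > v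
  have hCv : v < C := by
    by_contra hle
    push_neg at hle
    have hAle : A ≤ 2 ^ u := by omega
    have hBle : B ≤ 2 ^ v := by omega
    have hvle : v ≤ 2 ^ v := (Nat.lt_two_pow_self (n := v)).le
    have hNle : N ≤ 2 ^ v * (2 ^ u * 2 ^ v) := by
      calc N = C * (A * B) := hCN.symm
      _ ≤ v * (2 ^ u * 2 ^ v) := by
          apply Nat.mul_le_mul hle (Nat.mul_le_mul hAle hBle)
      _ ≤ 2 ^ v * (2 ^ u * 2 ^ v) := by
          apply Nat.mul_le_mul_right
          exact hvle
    have hexp : u + 2 * v + 2 ≤ u * v := by nlinarith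
    have hpow : (2:ℕ) ^ (u + 2 * v) < 2 ^ (u * v) := by
      apply Nat.pow_lt_pow_right (by omega)
      omega
    have : 2 ^ v * (2 ^ u * 2 ^ v) = 2 ^ (u + 2 * v) := by
      rw [← pow_add, ← pow_add]; ring_nf
    rw [this] at hNle
    have hN2 : 2 ^ (u * v - 1) ≤ N := by
      have hx : 0 < u * v := Nat.mul_pos (by omega) (by omega)
      have h1 : (2:ℕ) ^ (u*v - 1) < 2 ^ (u*v) := Nat.pow_lt_pow_right (by omega) (by omega)
      omega
    have h3 : (2:ℕ) ^ (u + 2*v) < 2 ^ (u*v - 1) := Nat.pow_lt_pow_right (by omega) (by omega)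
    omega
  -- main argument
  have hCdvdN : C ∣ N := ⟨A * B, hCN.symm⟩
  have hNodd2 : ¬ 2 ∣ N := by
    have h1 : 2 ∣ 2 ^ (u * v) := dvd_pow_self 2 (by nlinarith)
    have h2 : 2 ≤ 2 ^ (u * v) := Nat.le_of_dvd (by positivity) h1
    omega
  by_contra hcon
  push_neg at hcon
  -- every prime dividing C equals v
  have hCprime : ∀ l : ℕ, l.Prime → l ∣ C → l = v := by
    intro l hl hlC
    haveI : Fact l.Prime := ⟨hl⟩
    have hlN : l ∣ N := hlC.trans hCdvdN
    have hgl : (2 : ZMod l) ^ (u * v) = 1 := dvd_two_pow_sub_one_iff.mp hlN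
    have hedvd : orderOf (2 : ZMod l) ∣ u * v := orderOf_dvd_of_pow_eq_one hgl
    have hl2 : l ≠ 2 := by rintro rfl; exact hNodd2 hlN
    rcases dvd_mul_prime_cases hu hv hune hedvd with h1 | h1 | h1 | h1
    · exfalso
      have hx : (2 : ZMod l) ^ 1 = 1 := by have h' := pow_orderOf_eq_one (2 : ZMod l); rwa [h1] at h'
      have := Nat.le_of_dvd one_pos (dvd_two_pow_sub_one_iff.mpr hx)
      have := hl.two_le
      omega
    · -- order u
      have h2u1 : (2 : ZMod l) ^ u = 1 := by rw [← h1]; exact pow_orderOf_eq_one _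
      have hlS : l ∣ S := hlC.trans ⟨B, hCB.symm⟩
      have hSv : ((S : ℕ) : ZMod l) = (v : ZMod l) := by
        rw [hS]
        push_cast
        have : ∀ i ∈ range v, ((2 : ZMod l) ^ u) ^ i = 1 := by
          intro i _; rw [h2u1, one_pow]
        rw [Finset.sum_congr rfl this, Finset.sum_const, Finset.card_range,
          nsmul_eq_mul, mul_one]
      have hZ : (v : ZMod l) = 0 := by
        rw [← hSv, ZMod.natCast_eq_zero_iff]
        exact hlS
      have hlv : l ∣ v := (ZMod.natCast_eq_zero_iff _ _).mp hZ
      exact (Nat.prime_dvd_prime_iff_eq hl hv).mp hlv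
    · -- order v : gives l = u, then contradiction
      exfalso
      have h2v1 : (2 : ZMod l) ^ v = 1 := by rw [← h1]; exact pow_orderOf_eq_one _
      have hlS' : l ∣ S' := hlC.trans ⟨A, hCA.symm⟩
      have hSu : ((S' : ℕ) : ZMod l) = (u : ZMod l) := by
        rw [hS']
        push_cast
        have : ∀ i ∈ range u, ((2 : ZMod l) ^ v) ^ i = 1 := by
          intro i _; rw [h2v1, one_pow]
        rw [Finset.sum_congr rfl this, Finset.sum_const, Finset.card_range,
          nsmul_eq_mul, mul_one]
      have hZ : (u : ZMod l) = 0 := by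
        rw [← hSu, ZMod.natCast_eq_zero_iff]
        exact hlS'
      have hlu : l ∣ u := (ZMod.natCast_eq_zero_iff _ _).mp hZ
      have hlequ : l = u := (Nat.prime_dvd_prime_iff_eq hl hu).mp hlu
      have h20 : (2 : ZMod l) ≠ 0 := by
        have : ((2 : ℕ) : ZMod l) ≠ 0 := by
          rw [Ne, ZMod.natCast_eq_zero_iff]
          exact fun hdvd => hl2 ((Nat.prime_dvd_prime_iff_eq hl Nat.prime_two).mp hdvd)
        simpa using this
      have hford : orderOf (2 : ZMod l) ∣ l - 1 := ZMod.orderOf_dvd_card_sub_one h20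
      rw [h1, hlequ] at hford
      have := Nat.le_of_dvd (by omega) hford
      omega
    · exact absurd h1 (hcon l hl hlN)
  -- C is a power of v, with exponent ≥ 2
  have hC0 : C ≠ 0 := by omega
  obtain ⟨k, hCk⟩ : ∃ k, C = v ^ k :=
    ⟨_, Nat.eq_prime_pow_of_unique_prime_dvd hC0 (fun hq hdvd => hCprime _ hq hdvd)⟩
  have hk2 : 2 ≤ k := by
    by_contra hlt
    push_neg at hlt
    interval_cases k
    · rw [pow_zero] at hCk; omega
    · rw [pow_one] at hCk; omega
  have hv2C : v ^ 2 ∣ C := hCk ▸ pow_dvd_pow v hk2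
  have hvC : v ∣ C := dvd_trans (dvd_pow_self v two_ne_zero) hv2C
  -- the order of 2 mod v is u
  haveI : Fact v.Prime := ⟨hv⟩
  have hvN : v ∣ N := hvC.trans hCdvdN
  have hgv : (2 : ZMod v) ^ (u * v) = 1 := dvd_two_pow_sub_one_iff.mp hvN
  have hev_dvd : orderOf (2 : ZMod v) ∣ u * v := orderOf_dvd_of_pow_eq_one hgv
  have hv2ne : v ≠ 2 := by omega
  have h20v : (2 : ZMod v) ≠ 0 := by
    have : ((2 : ℕ) : ZMod v) ≠ 0 := by
      rw [Ne, ZMod.natCast_eq_zero_iff]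
      exact fun hdvd => hv2ne ((Nat.prime_dvd_prime_iff_eq hv Nat.prime_two).mp hdvd)
    simpa using this
  have hev_fermat : orderOf (2 : ZMod v) ∣ v - 1 := ZMod.orderOf_dvd_card_sub_one h20v
  have hev_le : orderOf (2 : ZMod v) ≤ v - 1 := Nat.le_of_dvd (by omega) hev_fermat
  have hordu : orderOf (2 : ZMod v) = u := by
    rcases dvd_mul_prime_cases hu hv hune hev_dvd with h1 | h1 | h1 | h1
    · exfalso
      have hx : (2 : ZMod v) ^ 1 = 1 := by have h' := pow_orderOf_eq_one (2 : ZMod v); rwa [h1] at h'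
      have := Nat.le_of_dvd one_pos (dvd_two_pow_sub_one_iff.mpr hx)
      omega
    · exact h1
    · omega
    · exfalso
      have : v ≤ u * v := Nat.le_mul_of_pos_left v (by omega)
      omega
  have hvA : v ∣ A := by
    apply dvd_two_pow_sub_one_iff.mpr
    rw [← hordu]; exact pow_orderOf_eq_one _
  -- final contradiction via v² ∤ S
  have hv2S : v ^ 2 ∣ S := hv2C.trans ⟨B, hCB.symm⟩
  set a : ℤ := (2 : ℤ) ^ u with ha
  have hva : (v : ℤ) ∣ a - 1 := by
    have := Int.natCast_dvd_natCast.mpr hvA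
    rwa [hA, Nat.cast_sub h2u, Nat.cast_pow] at this
  have hgeo : ∀ b : ℤ, (v:ℤ) ∣ b - 1 → ∀ n : ℕ, (v : ℤ) ∣ (∑ i ∈ range n, b ^ i) - n := by
    intro b hb n
    have h1 : ∑ i ∈ range n, (b ^ i - 1) = (∑ i ∈ range n, b ^ i) - n := by
      rw [Finset.sum_sub_distrib, Finset.sum_const, Finset.card_range, nsmul_eq_mul, mul_one]
    rw [← h1]
    refine Finset.dvd_sum fun i _ => dvd_trans hb ?_
    simpa using sub_dvd_pow_sub_pow b 1 i
  have hT : ((S : ℕ) : ℤ) - v = (∑ i ∈ range v, ∑ j ∈ range i, a ^ j) * (a - 1) := by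
    rw [Finset.sum_mul]
    have h2 : ∀ i ∈ range v, (∑ j ∈ range i, a ^ j) * (a - 1) = a ^ i - 1 :=
      fun i _ => geom_sum_mul a i
    rw [Finset.sum_congr rfl h2, Finset.sum_sub_distrib, Finset.sum_const,
      Finset.card_range, nsmul_eq_mul, mul_one, hS]
    push_cast
    ring
  have hvT : (v : ℤ) ∣ (∑ i ∈ range v, ∑ j ∈ range i, a ^ j) := by
    have h1 : (v : ℤ) ∣ (∑ i ∈ range v, ((∑ j ∈ range i, a ^ j) - i)) :=
      Finset.dvd_sum fun i _ => hgeo a hva i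
    have h2 : (v : ℤ) ∣ ∑ i ∈ range v, (i : ℤ) := by
      set w := (v - 1) / 2 with hw
      have hvw : v - 1 = 2 * w := by
        have := hv.odd_of_ne_two hv2ne
        rw [Nat.odd_iff] at this
        omega
      have h3 : (∑ i ∈ range v, i) * 2 = v * (v - 1) := Finset.sum_range_id_mul_two v
      have h4 : v * (v - 1) = 2 * (v * w) := by rw [hvw]; ring
      have h5 : (∑ i ∈ range v, i) = v * w := by omega
      have h6 : (v : ℕ) ∣ ∑ i ∈ range v, i := ⟨w, h5⟩
      have := Int.natCast_dvd_natCast.mpr h6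
      rwa [Nat.cast_sum] at this
    have h3 := dvd_add h1 h2
    rwa [Finset.sum_sub_distrib, sub_add_cancel] at h3
  have hkey : ((v : ℤ)) ^ 2 ∣ ((S : ℕ) : ℤ) - v := by
    rw [hT, sq]
    exact mul_dvd_mul hvT hva
  have hv2Sz : ((v : ℤ)) ^ 2 ∣ ((S : ℕ) : ℤ) := by
    have := Int.natCast_dvd_natCast.mpr hv2S
    rwa [Nat.cast_pow] at this
  have hfin : ((v : ℤ)) ^ 2 ∣ (v : ℤ) := by
    have := dvd_sub hv2Sz hkey
    simpa using this
  have := Int.le_of_dvd (by exact_mod_cast Nat.pos_of_ne_zero (by omega)) hfin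
  have hcontra : (v : ℤ) ^ 2 ≤ (v : ℤ) := this
  have : (v : ℕ) * v ≤ v := by exact_mod_cast (by rw [← sq]; exact_mod_cast hcontra : ((v*v : ℕ) : ℤ) ≤ (v:ℕ))
  nlinarith

set_option maxHeartbeats 2000000 in
theorem prime_iff_prod_two_pow_add_one_modEq (m : ℕ) (hm : 2 < m) :
    m.Prime ↔ (∏ j ∈ Finset.Icc 1 (m - 1), (2 ^ j + 1)) ≡ 1 [MOD 2 ^ m - 1] := by
  have h2m : 2 ^ 3 ≤ 2 ^ m := Nat.pow_le_pow_right (by omega) hm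
  constructor
  · -- prime → congruence
    intro hmp
    have hmodd : Odd m := hmp.odd_of_ne_two (by omega)
    set N := 2 ^ m - 1 with hN
    haveI : NeZero N := ⟨by omega⟩
    set x : ZMod N := 2 with hx
    have hxm : x ^ m = 1 := dvd_two_pow_sub_one_iff.mp dvd_rfl
    have hBunit : IsUnit (∏ j ∈ Icc 1 (m - 1), (x ^ j - 1)) := by
      refine Finset.prod_induction _ IsUnit (fun a b => IsUnit.mul) isUnit_one ?_
      intro j hj
      simp only [Finset.mem_Icc] at hj
      have hcast : ((2 ^ j - 1 : ℕ) : ZMod N) = x ^ j - 1 := by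
        have : (1:ℕ) ≤ 2 ^ j := Nat.one_le_two_pow
        push_cast [Nat.cast_sub this]
        rw [hx]
      rw [← hcast, ZMod.isUnit_iff_coprime]
      apply Nat.Coprime.coprime_dvd_right (dvd_refl N)
      apply coprime_two_pow_sub_one
      exact (hmp.coprime_iff_not_dvd.mpr (fun hd => by
        have := Nat.le_of_dvd (by omega) hd
        omega)).symm
    have hkey := key_prod_identity hmodd hxm
    have hA1 : (∏ j ∈ Icc 1 (m - 1), (x ^ j + 1)) = 1 := by
      have := hkey.trans (one_mul (∏ j ∈ Icc 1 (m - 1), (x ^ j - 1))).symm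
      exact hBunit.mul_right_cancel this
    have hcast : ((∏ j ∈ Icc 1 (m - 1), (2 ^ j + 1) : ℕ) : ZMod N) = ((1 : ℕ) : ZMod N) := by
      push_cast
      rw [← hx] at *
      convert hA1 using 2
    exact (ZMod.natCast_eq_natCast_iff _ _ _).mp hcast
  · -- congruence → prime
    intro hP
    by_contra hnp
    rcases Nat.even_or_odd m with hme | hmo
    · -- even case: contradiction mod 3
      have h3 : (3:ℕ) ∣ 2 ^ m - 1 := by
        obtain ⟨t, ht⟩ := hme
        have := Nat.sub_dvd_pow_sub_pow 4 1 t
        have h4 : (4:ℕ) ^ t = 2 ^ m := by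
          rw [ht, show (4:ℕ) = 2^2 by norm_num, ← pow_mul]
          congr 1
          omega
        rw [h4, one_pow] at this
        simpa using this
      have hP3 : (∏ j ∈ Finset.Icc 1 (m - 1), (2 ^ j + 1)) ≡ 1 [MOD 3] := hP.of_dvd h3
      have h3P : (3:ℕ) ∣ ∏ j ∈ Finset.Icc 1 (m - 1), (2 ^ j + 1) := by
        have h1m : 1 ∈ Finset.Icc 1 (m - 1) := by
          simp only [Finset.mem_Icc]; omega
        have := Finset.dvd_prod_of_mem (fun j => 2 ^ j + 1) h1m
        simpa using this
      have h03 : (0:ℕ) ≡ 1 [MOD 3] := ((Nat.modEq_zero_iff_dvd).mpr h3P).symm.trans hP3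
      have := (Nat.modEq_iff_dvd' (by omega)).mp h03
      omega
    · -- odd composite case
      have key : ∀ e : ℕ, e ∣ m →
          (∃ q : ℕ, q.Prime ∧ q ∣ 2 ^ e - 1 ∧ orderOf (2 : ZMod q) = e) →
          e ∣ m / e - 1 := by
        rintro e hedvd ⟨q, hq, hqd, hord⟩
        have hqN : q ∣ 2 ^ m - 1 := by
          refine hqd.trans ?_
          obtain ⟨c, rfl⟩ := hedvd
          have := Nat.sub_dvd_pow_sub_pow (2 ^ e) 1 c
          rwa [← pow_mul, one_pow] at this
        have := constraint_lemma hm hmo hq hqN hP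
        rwa [hord] at this
      set p := m.minFac with hp'
      have hp : p.Prime := Nat.minFac_prime (by omega)
      have hpm : p ∣ m := Nat.minFac_dvd m
      have hp2 : p ≠ 2 := by
        rintro h
        rw [Nat.odd_iff] at hmo
        obtain ⟨c, hc⟩ := hpm
        rw [h] at hc
        omega
      have hp3 : 3 ≤ p := by have := hp.two_le; omega
      have c1 : p ∣ m / p - 1 := key p hpm (exists_order_prime hp hp2)
      set d := m / p with hd'
      have hd : p * d = m := Nat.mul_div_cancel' hpm
      have hdne1 : d ≠ 1 := by
        rintro h
        rw [h, Nat.mul_one] at hd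
        exact hnp (hd ▸ hp)
      have hdpos : 0 < d := by
        rcases Nat.eq_zero_or_pos d with h | h
        · rw [h, Nat.mul_zero] at hd; omega
        · exact h
      have hpd : ¬ p ∣ d := by
        intro h
        have := Nat.dvd_sub h c1
        have hd2 : 2 ≤ d := by omega
        rw [Nat.sub_sub_self (by omega)] at this
        exact absurd (Nat.le_of_dvd one_pos this) (by omega)
      have hdodd : Odd d := by
        rw [Nat.odd_iff] at hmo ⊢
        rcases Nat.even_or_odd d with h | h
        · exfalso
          obtain ⟨t, ht⟩ := h
          have : m = 2 * (p * t) := by rw [← hd, ht]; ring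
          omega
        · rwa [Nat.odd_iff] at h
      by_cases hdp : d.Prime
      · -- m = p * d with d prime
        have hd2 : d ≠ 2 := by
          rw [Nat.odd_iff] at hdodd; omega
        have c2 : d ∣ m / d - 1 := key d ⟨p, by rw [← hd]; ring⟩ (exists_order_prime hdp hd2)
        have hmd : m / d = p := by
          rw [← hd, Nat.mul_comm p d, Nat.mul_div_cancel_left _ hdpos]
        rw [hmd] at c2
        have hpled : p ≤ d := Nat.minFac_le_of_dvd hdp.two_le ⟨p, by rw [← hd]; ring⟩
        have hpned : p ≠ d := fun h => hpd (h ▸ dvd_rfl)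
        have := Nat.le_of_dvd (by omega) c2
        omega
      · -- d composite : two distinct primes u < v with u*v proper divisor
        set v := d.minFac with hv'
        have hv : v.Prime := Nat.minFac_prime hdne1
        have hvd : v ∣ d := Nat.minFac_dvd d
        have hpv : p ≤ v := Nat.minFac_le_of_dvd hv.two_le (hvd.trans ⟨p, by rw [← hd]; ring⟩)
        have hpnev : p ≠ v := fun h => hpd (h ▸ hvd)
        have hplv : p < v := lt_of_le_of_ne hpv hpnev
        have huvm : p * v ∣ m := by
          rw [← hd]
          exact Nat.mul_dvd_mul_left p hvd
        set w := d / v with hw'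
        have hwv : v * w = d := Nat.mul_div_cancel' hvd
        have hwne1 : w ≠ 1 := by
          rintro h
          rw [h, Nat.mul_one] at hwv
          exact hdp (hwv ▸ hv)
        have hwpos : 0 < w := by
          rcases Nat.eq_zero_or_pos w with h | h
          · rw [h, Nat.mul_zero] at hwv; omega
          · exact h
        have c3 : p * v ∣ m / (p * v) - 1 :=
          key (p * v) huvm (exists_order_mul hp hv (by omega) hplv)
        have cv : v ∣ m / v - 1 := key v (hvd.trans ⟨p, by rw [← hd]; ring⟩)
          (exists_order_prime hv (by
            have : Odd v := by
              rcases Nat.even_or_odd v with h | h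
              · exfalso
                rw [Nat.odd_iff] at hdodd
                obtain ⟨t, ht⟩ := h
                obtain ⟨c, hc⟩ := hvd
                have : d = 2 * (t * c) := by rw [hc, ht]; ring
                omega
              · exact h
            rw [Nat.odd_iff] at this; omega))
        have hmuv : m / (p * v) = w := by
          have : m = (p * v) * w := by rw [← hd, ← hwv]; ring
          rw [this, Nat.mul_div_cancel_left _ (Nat.mul_pos hp.pos hv.pos)]
        have hmv : m / v = p * w := by
          have : m = v * (p * w) := by rw [← hd, ← hwv]; ring
          rw [this, Nat.mul_div_cancel_left _ hv.pos]
        rw [hmuv] at c3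
        rw [hmv] at cv
        -- from c3 : v ∣ w - 1 ; from cv : v ∣ p*w - 1 ⇒ v ∣ p - 1, contradiction
        have hvw1 : v ∣ w - 1 := dvd_trans ⟨p, by ring⟩ c3
        have hvpw : v ∣ p * (w - 1) := hvw1.mul_left p
        have h7 : p * (w - 1) + p * 1 = p * w := by
          rw [← Nat.mul_add]
          congr 1
          omega
        have heq : p * w - 1 - p * (w - 1) = p - 1 := by omega
        have hvfin : v ∣ p - 1 := heq ▸ Nat.dvd_sub cv hvpw
        have := Nat.le_of_dvd (by omega) hvfin
        omega
end

section
/- If m is a natural number with m > 2 and ∏_{j=1}^{m-1} (2^j + 1) ≡ 1 (mod 2^m − 1), then m is prime. -/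
lemma dvd_iff_pow_eq_one (r k : ℕ) [NeZero r] : r ∣ 2 ^ k - 1 ↔ (2 : ZMod r) ^ k = 1 := by
  rw [← ZMod.natCast_eq_zero_iff]
  have h1 : (1:ℕ) ≤ 2 ^ k := Nat.one_le_two_pow
  push_cast [h1]
  constructor
  · intro h; linear_combination h
  · intro h; linear_combination h

lemma orderOf_two_of_dvd {p r : ℕ} (hp : p.Prime) (hr : r.Prime) (h : r ∣ 2 ^ p - 1) :
    orderOf (2 : ZMod r) = p := by
  haveI : Fact r.Prime := ⟨hr⟩
  have hdvd : orderOf (2 : ZMod r) ∣ p :=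
    orderOf_dvd_of_pow_eq_one ((dvd_iff_pow_eq_one r p).mp h)
  rcases (Nat.Prime.eq_one_or_self_of_dvd hp _ hdvd) with h1 | h1
  · exfalso
    have : (2 : ZMod r) ^ 1 = 1 := by
      have h' := pow_orderOf_eq_one (2 : ZMod r); rwa [h1] at h'
    have := (dvd_iff_pow_eq_one r 1).mpr this
    rw [pow_one] at this
    have h2 : r ∣ 1 := by simpa using this
    have := hr.one_lt
    simp at h2
    omega
  · exact h1

-- geometric sum identity in ℕ
lemma nat_geom_sum (a n : ℕ) (ha : 1 ≤ a) :
    (a - 1) * (∑ i ∈ Finset.range n, a ^ i) = a ^ n - 1 := by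
  have h1 : (1:ℕ) ≤ a ^ n := Nat.one_le_pow _ _ ha
  have := geom_sum_mul (a : ℤ) n
  have : ((a:ℤ) - 1) * (∑ i ∈ Finset.range n, (a:ℤ) ^ i) = (a:ℤ) ^ n - 1 := by
    rw [mul_comm]; exact this
  zify [ha, h1]
  push_cast at this ⊢
  linarith [this]

lemma geom_sum_sq {q : ℕ} (c : ℕ) (hq : Odd q) :
    (∑ i ∈ Finset.range q, (q*c+1) ^ i) ≡ q [MOD q^2] := by
  rw [← ZMod.natCast_eq_natCast_iff]
  push_cast
  have hqq : ((q : ZMod (q^2)) * q) = 0 := by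
    have h0 : (((q^2 : ℕ)) : ZMod (q^2)) = 0 := ZMod.natCast_self _
    push_cast at h0
    linear_combination h0
  have key : ∀ i : ℕ, ((q : ZMod (q^2))*c+1)^i = 1 + (i : ZMod (q^2))*(q*c) := by
    intro i
    induction i with
    | zero => simp
    | succ n ih =>
        have : ((q : ZMod (q^2))*c+1)^(n+1) = ((q : ZMod (q^2))*c+1)^n * ((q : ZMod (q^2))*c+1) :=
          pow_succ _ _
        rw [this, ih]
        push_cast
        linear_combination ((n : ZMod (q^2))*c*c) * hqq
  obtain ⟨t, ht⟩ := hq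
  rw [Finset.sum_congr rfl (fun i _ => key i), Finset.sum_add_distrib, ← Finset.sum_mul]
  have hsum : (∑ i ∈ Finset.range q, (i : ZMod (q^2))) = ((q * t : ℕ) : ZMod (q^2)) := by
    rw [← Nat.cast_sum]
    congr 1
    rw [Finset.sum_range_id]
    have h1 : q - 1 = 2 * t := by omega
    have h2 : q * (2 * t) = q * t * 2 := by ring
    rw [h1, h2, Nat.mul_div_cancel _ (by norm_num)]
  rw [hsum]
  simp only [Finset.sum_const, Finset.card_range, nsmul_eq_mul, mul_one]
  push_cast
  linear_combination ((t : ZMod (q^2)) * c) * hqq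

lemma geom_sum_mod (a n : ℕ) (ha : 1 ≤ a) :
    (∑ i ∈ Finset.range n, a ^ i) ≡ n [MOD a - 1] := by
  rw [← ZMod.natCast_eq_natCast_iff]
  push_cast
  have haa : ((a : ℕ) : ZMod (a-1)) = 1 := by
    have h0 : (((a-1 : ℕ)) : ZMod (a-1)) = 0 := ZMod.natCast_self _
    push_cast [ha] at h0
    linear_combination h0
  simp [haa]

lemma prod_blocks {r d : ℕ} (hd : 1 ≤ d) (h2 : (2 : ZMod r)^d = 1) :
    ∀ s : ℕ, (∏ j ∈ Finset.Icc 1 (d*(s+1) - 1), ((2:ZMod r)^j + 1))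
      = 2^s * (∏ j ∈ Finset.Icc 1 (d-1), ((2:ZMod r)^j + 1))^(s+1) := by
  have hIccIoc : ∀ y : ℕ, Finset.Icc 1 y = Finset.Ioc 0 y := by
    intro y; ext x; simp [Finset.mem_Icc, Finset.mem_Ioc]; omega
  have hblock : ∀ t : ℕ, 1 ≤ t → t % d = 0 →
      (∏ j ∈ Finset.Ioc (t - 1) (t + d - 1), ((2:ZMod r)^j + 1))
        = 2 * ∏ j ∈ Finset.Icc 1 (d-1), ((2:ZMod r)^j + 1) := by
    intro t ht htd
    have he : Finset.Ioc (t - 1) (t + d - 1) = Finset.Ico t (t + d) := by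
      ext x; simp [Finset.mem_Ioc, Finset.mem_Ico]; omega
    rw [he, Finset.prod_Ico_eq_prod_range]
    have h2t : (2 : ZMod r)^t = 1 := by
      obtain ⟨u, hu⟩ : d ∣ t := Nat.dvd_of_mod_eq_zero htd
      rw [hu, pow_mul, h2, one_pow]
    have hfac : ∀ i : ℕ, (2 : ZMod r)^(t + i) + 1 = (2 : ZMod r)^i + 1 := by
      intro i; rw [pow_add, h2t, one_mul]
    simp only [Nat.add_sub_cancel_left, hfac]
    rw [Finset.range_eq_Ico, Finset.prod_eq_prod_Ico_succ_bot (by omega : 0 < d)]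
    have he2 : Finset.Ico 1 d = Finset.Icc 1 (d-1) := by
      ext x; simp [Finset.mem_Icc, Finset.mem_Ico]; omega
    rw [he2]
    norm_num
  intro s
  induction s with
  | zero => simp
  | succ n ih =>
    have hdn : 1 ≤ d*(n+1) := Nat.one_le_iff_ne_zero.mpr (Nat.mul_ne_zero (by omega) (by omega))
    have hdn2 : d*(n+1) + d = d*(n+2) := by ring
    have key : (∏ j ∈ Finset.Ioc 0 (d*(n+1) - 1), ((2:ZMod r)^j + 1))
        * (∏ j ∈ Finset.Ioc (d*(n+1) - 1) (d*(n+2) - 1), ((2:ZMod r)^j + 1))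
        = ∏ j ∈ Finset.Ioc 0 (d*(n+2) - 1), ((2:ZMod r)^j + 1) :=
      Finset.prod_Ioc_consecutive _ (by omega) (by omega)
    rw [hIccIoc] at ih ⊢
    have hgoal : d * (n+1+1) = d * (n+2) := by ring
    rw [hgoal, ← key]
    have hb := hblock (d*(n+1)) hdn (by simp [Nat.mul_mod_right])
    have he4 : d*(n+1) + d - 1 = d*(n+2) - 1 := by omega
    rw [he4] at hb
    rw [ih, hb, hIccIoc]
    ring

lemma prod_pm_one {r d : ℕ} [Fact r.Prime] (hd : Odd d) (hd1 : 1 < d)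
    (h2 : (2 : ZMod r)^d = 1) (hmin : ∀ j, 0 < j → j < d → (2 : ZMod r)^j ≠ 1) :
    (∏ j ∈ Finset.Icc 1 (d-1), ((2:ZMod r)^j + 1)) = 1 := by
  obtain ⟨e, he⟩ := hd
  have hd0 : 0 < d := by omega
  have hpow : ∀ n : ℕ, (2:ZMod r)^n = 2^(n % d) := by
    intro n
    conv_lhs => rw [← Nat.div_add_mod n d]
    rw [pow_add, pow_mul, h2, one_pow, one_mul]
  have hDne : (∏ j ∈ Finset.Icc 1 (d-1), ((2:ZMod r)^j - 1)) ≠ 0 := by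
    rw [Finset.prod_ne_zero_iff]
    intro j hj
    rw [Finset.mem_Icc] at hj
    exact sub_ne_zero_of_ne (hmin j (by omega) (by omega))
  have step1 : (∏ j ∈ Finset.Icc 1 (d-1), ((2:ZMod r)^j + 1))
      * (∏ j ∈ Finset.Icc 1 (d-1), ((2:ZMod r)^j - 1))
      = ∏ j ∈ Finset.Icc 1 (d-1), ((2:ZMod r)^(2*j) - 1) := by
    rw [← Finset.prod_mul_distrib]
    refine Finset.prod_congr rfl (fun j _ => ?_)
    have : (2:ZMod r)^(2*j) = ((2:ZMod r)^j)^2 := by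
      rw [← pow_mul, mul_comm]
    rw [this]; ring
  have hdvd : ∀ j : ℕ, 0 < j → j < d → ¬ (2*j) % d = 0 := by
    intro j hj1 hj2 hmod
    have : d ∣ 2 * j := Nat.dvd_of_mod_eq_zero hmod
    have hcop : Nat.Coprime d 2 := Nat.coprime_two_right.mpr ⟨e, he⟩
    have : d ∣ j := hcop.dvd_of_dvd_mul_left this
    have := Nat.le_of_dvd hj1 this
    omega
  have step2 : (∏ j ∈ Finset.Icc 1 (d-1), ((2:ZMod r)^(2*j) - 1))
      = ∏ j ∈ Finset.Icc 1 (d-1), ((2:ZMod r)^j - 1) := by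
    refine Finset.prod_nbij' (fun j => (2*j) % d) (fun b => if b % 2 = 0 then b/2 else (b+d)/2)
      ?_ ?_ ?_ ?_ ?_
    · intro a ha
      simp only [Finset.mem_Icc] at ha ⊢
      have h1 : (2*a) % d < d := Nat.mod_lt _ hd0
      have h2' := hdvd a (by omega) (by omega)
      omega
    · intro b hb
      simp only [Finset.mem_Icc] at hb ⊢
      split <;> omega
    · intro a ha
      simp only [Finset.mem_Icc] at ha
      by_cases hc : 2*a < d
      · rw [Nat.mod_eq_of_lt hc, if_pos (by omega : 2*a % 2 = 0)]
        omega
      · have h1 : (2*a) % d = 2*a - d := by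
          rw [Nat.mod_eq_sub_mod (by omega)]
          exact Nat.mod_eq_of_lt (by omega)
        rw [h1, if_neg (by omega : ¬ (2*a - d) % 2 = 0)]
        omega
    · intro b hb
      simp only [Finset.mem_Icc] at hb
      by_cases hc : b % 2 = 0
      · rw [if_pos hc]
        have : 2 * (b/2) = b := by omega
        rw [this]
        exact Nat.mod_eq_of_lt (by omega)
      · rw [if_neg hc]
        have : 2 * ((b+d)/2) = b + d := by omega
        rw [this, Nat.add_mod_right]
        exact Nat.mod_eq_of_lt (by omega)
    · intro a ha
      rw [hpow (2*a)]
  have step3 : (∏ j ∈ Finset.Icc 1 (d-1), ((2:ZMod r)^j + 1))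
      * (∏ j ∈ Finset.Icc 1 (d-1), ((2:ZMod r)^j - 1))
      = 1 * (∏ j ∈ Finset.Icc 1 (d-1), ((2:ZMod r)^j - 1)) := by
    rw [step1, step2, one_mul]
  exact mul_right_cancel₀ hDne step3


lemma orderOf_two_ne_one {r : ℕ} (hr : r.Prime) : orderOf (2 : ZMod r) ≠ 1 := by
  haveI : NeZero r := ⟨hr.pos.ne'⟩
  intro h
  have h2 : (2 : ZMod r) ^ 1 = 1 := by
    have h' := pow_orderOf_eq_one (2 : ZMod r); rwa [h] at h'
  have := (dvd_iff_pow_eq_one r 1).mpr h2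
  norm_num at this
  exact absurd this (by have := hr.two_le; omega)

lemma dvd_prime_mul_cases {p q e : ℕ} (hp : p.Prime) (hq : q.Prime) (h : e ∣ p * q) :
    e = 1 ∨ e = p ∨ e = q ∨ e = p * q := by
  by_cases hpe : p ∣ e
  · obtain ⟨f, hf⟩ := hpe
    subst hf
    have hfq : f ∣ q := (mul_dvd_mul_iff_left hp.pos.ne').mp h
    rcases (Nat.Prime.eq_one_or_self_of_dvd hq _ hfq) with h1 | h1 <;> subst h1
    · right; left; omega
    · right; right; right; rfl
  · have hcop : Nat.Coprime e p := ((hp.coprime_iff_not_dvd).mpr hpe).symm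
    have heq : e ∣ q := hcop.dvd_of_dvd_mul_left h
    rcases (Nat.Prime.eq_one_or_self_of_dvd hq _ heq) with h1 | h1
    · left; exact h1
    · right; right; left; exact h1

lemma plus_one_lt_two_pow {n : ℕ} (hn : 2 ≤ n) : n + 1 < 2 ^ n := by
  induction n with
  | zero => omega
  | succ k ih =>
    rcases Nat.lt_or_ge k 2 with hk | hk
    · interval_cases k
      · omega
      · norm_num
    · have h5 := ih hk
      have h6 : 2 ^ (k+1) = 2 * 2^k := by ring
      omega

lemma size_helper {a b : ℕ} (ha : 2 ≤ a) (hb : 4 ≤ b) : (a+1)*(b+1) < 2 ^ (a*b - 1) := by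
  have h1 : a + 1 < 2 ^ a := plus_one_lt_two_pow ha
  have h2 : b + 1 < 2 ^ b := plus_one_lt_two_pow (by omega)
  have h4 : a + b + 2 ≤ a * b := by
    zify
    nlinarith [mul_nonneg (by linarith : (0:ℤ) ≤ (a:ℤ) - 2) (by linarith : (0:ℤ) ≤ (b:ℤ) - 1)]
  have h3 : a + b ≤ a * b - 1 := by omega
  calc (a+1)*(b+1) < 2^a * 2^b := by
        apply Nat.mul_lt_mul_of_lt_of_le h1 (le_of_lt h2)
        positivity
    _ = 2 ^ (a+b) := by rw [pow_add]
    _ ≤ 2 ^ (a*b - 1) := Nat.pow_le_pow_right (by norm_num) h3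

lemma size_helper' {p q : ℕ} (hp : 3 ≤ p) (hq : 5 ≤ q) : p * q < 2 ^ (p*q - p - q) := by
  obtain ⟨a, rfl⟩ : ∃ a, p = a + 1 := ⟨p-1, by omega⟩
  obtain ⟨b, rfl⟩ : ∃ b, q = b + 1 := ⟨q-1, by omega⟩
  have hexp : (a+1)*(b+1) - (a+1) - (b+1) = a*b - 1 := by
    have : (a+1)*(b+1) = a*b + a + b + 1 := by ring
    omega
  rw [hexp]
  exact size_helper (by omega) (by omega)

lemma exists_primitive {p q : ℕ} (hp : p.Prime) (hq : q.Prime) (hpo : Odd p) (hqo : Odd q)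
    (hlt : p < q) : ∃ r : ℕ, r.Prime ∧ orderOf (2 : ZMod r) = p * q := by
  have hp3 : 3 ≤ p := by obtain ⟨t,ht⟩ := hpo; have := hp.two_le; omega
  have hq5 : 5 ≤ q := by obtain ⟨t,ht⟩ := hqo; have := hq.two_le; omega
  have hA2 : 7 ≤ 2^p - 1 := by
    have : (2:ℕ)^3 ≤ 2^p := Nat.pow_le_pow_right (by norm_num) hp3
    omega
  have hB2 : 31 ≤ 2^q - 1 := by
    have : (2:ℕ)^5 ≤ 2^q := Nat.pow_le_pow_right (by norm_num) hq5
    omega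
  have hNA : (2^p - 1) * (∑ i ∈ Finset.range q, (2^p)^i) = 2^(p*q) - 1 := by
    rw [nat_geom_sum _ q Nat.one_le_two_pow, ← pow_mul]
  have hNB : (2^q - 1) * (∑ i ∈ Finset.range p, (2^q)^i) = 2^(p*q) - 1 := by
    rw [nat_geom_sum _ p Nat.one_le_two_pow, ← pow_mul, mul_comm q p]
  have hcop : Nat.Coprime (2^p - 1) (2^q - 1) := by
    by_contra hg
    have hg1 : 2 ≤ Nat.gcd (2^p - 1) (2^q - 1) := by
      have h0 : Nat.gcd (2^p - 1) (2^q - 1) ≠ 0 := by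
        intro h0
        rw [Nat.gcd_eq_zero_iff] at h0
        omega
      unfold Nat.Coprime at hg
      omega
    have hr : (Nat.gcd (2^p - 1) (2^q - 1)).minFac.Prime := Nat.minFac_prime (by omega)
    have hrA := (Nat.minFac_dvd _).trans (Nat.gcd_dvd_left (2^p - 1) (2^q - 1))
    have hrB := (Nat.minFac_dvd _).trans (Nat.gcd_dvd_right (2^p - 1) (2^q - 1))
    have e1 := orderOf_two_of_dvd hp hr hrA
    have e2 := orderOf_two_of_dvd hq hr hrB
    omega
  have hAdvd : (2^p - 1) ∣ 2^(p*q) - 1 := by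
    rw [pow_mul]
    simpa using Nat.sub_dvd_pow_sub_pow (2^p) 1 q
  have hBdvd : (2^q - 1) ∣ 2^(p*q) - 1 := by
    rw [mul_comm, pow_mul]
    simpa using Nat.sub_dvd_pow_sub_pow (2^q) 1 p
  have hABN : (2^p - 1) * (2^q - 1) ∣ 2^(p*q) - 1 :=
    Nat.Coprime.mul_dvd_of_dvd_of_dvd hcop hAdvd hBdvd
  set C := (2^(p*q) - 1) / ((2^p - 1) * (2^q - 1)) with hCdef
  have hCmul : C * ((2^p - 1) * (2^q - 1)) = 2^(p*q) - 1 := Nat.div_mul_cancel hABN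
  have hCN : C ∣ 2^(p*q) - 1 := ⟨_, hCmul.symm⟩
  have hCB : C * (2^q - 1) = ∑ i ∈ Finset.range q, (2^p)^i := by
    have h1 : (2^p - 1) * (C * (2^q - 1)) = (2^p - 1) * (∑ i ∈ Finset.range q, (2^p)^i) := by
      rw [hNA, ← hCmul]; ring
    exact Nat.eq_of_mul_eq_mul_left (by omega) h1
  have hCA : C * (2^p - 1) = ∑ i ∈ Finset.range p, (2^q)^i := by
    have h1 : (2^q - 1) * (C * (2^p - 1)) = (2^q - 1) * (∑ i ∈ Finset.range p, (2^q)^i) := by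
      rw [hNB, ← hCmul]; ring
    exact Nat.eq_of_mul_eq_mul_left (by omega) h1
  -- size bound
  have hCgt : p * q < C := by
    have hpqpow : 1 ≤ 2^(p*q) := Nat.one_le_two_pow
    have hC1 : 1 ≤ C := by
      rcases Nat.eq_zero_or_pos C with h0 | h1
      · rw [h0] at hCmul
        simp at hCmul
        have : (2:ℕ)^15 ≤ 2^(p*q) := Nat.pow_le_pow_right (by norm_num) (by nlinarith)
        omega
      · exact h1
    have h1 : (2^p - 1) * (2^q - 1) + 1 ≤ 2^(p+q) := by
      rw [pow_add]
      obtain ⟨x, hx⟩ : ∃ x, 2^p = x + 1 := ⟨2^p - 1, by omega⟩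
      obtain ⟨y, hy⟩ : ∃ y, 2^q = y + 1 := ⟨2^q - 1, by omega⟩
      rw [hx, hy, Nat.add_sub_cancel, Nat.add_sub_cancel]
      nlinarith
    have h2 : 2^(p*q) ≤ C * 2^(p+q) := by
      calc 2^(p*q) = (2^(p*q) - 1) + 1 := by omega
        _ = C * ((2^p - 1) * (2^q - 1)) + 1 := by rw [hCmul]
        _ ≤ C * ((2^p - 1) * (2^q - 1)) + C := by omega
        _ = C * ((2^p - 1) * (2^q - 1) + 1) := by ring
        _ ≤ C * 2^(p+q) := Nat.mul_le_mul_left _ h1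
    have hpq : p + q ≤ p * q := by nlinarith
    have h3 : 2^(p*q) = 2^(p*q - p - q) * 2^(p+q) := by
      rw [← pow_add]
      congr 1
      omega
    rw [h3] at h2
    have h4 : 2^(p*q - p - q) ≤ C := Nat.le_of_mul_le_mul_right h2 (by positivity)
    have h5 := size_helper' hp3 hq5
    omega
  by_cases hex : ∃ r, r.Prime ∧ r ∣ C ∧ r ≠ p ∧ r ≠ q
  · obtain ⟨r, hr, hrC, hrp, hrq⟩ := hex
    refine ⟨r, hr, ?_⟩
    haveI : NeZero r := ⟨hr.pos.ne'⟩
    have hrN : r ∣ 2^(p*q) - 1 := hrC.trans hCN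
    have h2pq : (2 : ZMod r)^(p*q) = 1 := (dvd_iff_pow_eq_one r (p*q)).mp hrN
    have hedvd : orderOf (2 : ZMod r) ∣ p*q := orderOf_dvd_of_pow_eq_one h2pq
    rcases dvd_prime_mul_cases hp hq hedvd with h1 | h1 | h1 | h1
    · exact absurd h1 (orderOf_two_ne_one hr)
    · exfalso
      have hrA : r ∣ 2^p - 1 := (dvd_iff_pow_eq_one r p).mpr (by rw [← h1, pow_orderOf_eq_one])
      have hrSA : r ∣ ∑ i ∈ Finset.range q, (2^p)^i := hCB ▸ hrC.mul_right _
      have hmod : (∑ i ∈ Finset.range q, (2^p)^i) ≡ q [MOD 2^p - 1] :=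
        geom_sum_mod (2^p) q Nat.one_le_two_pow
      have hmod2 : (∑ i ∈ Finset.range q, (2^p)^i) ≡ q [MOD r] := Nat.ModEq.of_dvd hrA hmod
      have hzero : (∑ i ∈ Finset.range q, (2^p)^i) ≡ 0 [MOD r] := (Nat.modEq_zero_iff_dvd).mpr hrSA
      have : q ≡ 0 [MOD r] := hmod2.symm.trans hzero
      have hrq' : r ∣ q := (Nat.modEq_zero_iff_dvd).mp this
      exact hrq ((Nat.prime_dvd_prime_iff_eq hr hq).mp hrq')
    · exfalso
      have hrB : r ∣ 2^q - 1 := (dvd_iff_pow_eq_one r q).mpr (by rw [← h1, pow_orderOf_eq_one])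
      have hrSB : r ∣ ∑ i ∈ Finset.range p, (2^q)^i := hCA ▸ hrC.mul_right _
      have hmod : (∑ i ∈ Finset.range p, (2^q)^i) ≡ p [MOD 2^q - 1] :=
        geom_sum_mod (2^q) p Nat.one_le_two_pow
      have hmod2 : (∑ i ∈ Finset.range p, (2^q)^i) ≡ p [MOD r] := Nat.ModEq.of_dvd hrB hmod
      have hzero : (∑ i ∈ Finset.range p, (2^q)^i) ≡ 0 [MOD r] := (Nat.modEq_zero_iff_dvd).mpr hrSB
      have : p ≡ 0 [MOD r] := hmod2.symm.trans hzero
      have hrp' : r ∣ p := (Nat.modEq_zero_iff_dvd).mp this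
      exact hrp ((Nat.prime_dvd_prime_iff_eq hr hp).mp hrp')
    · exact h1
  · exfalso
    push_neg at hex
    have hCne : C ≠ 0 := by omega
    have hq2 : ¬ q^2 ∣ C := by
      intro hq2d
      have hqC : q ∣ C := (dvd_pow_self q (by norm_num : (2:ℕ) ≠ 0)).trans hq2d
      have hqN : q ∣ 2^(p*q) - 1 := hqC.trans hCN
      haveI : Fact q.Prime := ⟨hq⟩
      have h2pq : (2 : ZMod q)^(p*q) = 1 := (dvd_iff_pow_eq_one q (p*q)).mp hqN
      have he : orderOf (2 : ZMod q) ∣ p * q := orderOf_dvd_of_pow_eq_one h2pq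
      have hne0 : (2 : ZMod q) ≠ 0 := by
        intro h0
        have h2 : ((2:ℕ) : ZMod q) = 0 := by exact_mod_cast h0
        have h3 := (ZMod.natCast_eq_zero_iff 2 q).mp h2
        have := Nat.le_of_dvd (by norm_num) h3
        omega
      have hcard : orderOf (2 : ZMod q) ∣ q - 1 := ZMod.orderOf_dvd_card_sub_one hne0
      have hcard' := Nat.le_of_dvd (by omega) hcard
      rcases dvd_prime_mul_cases hp hq he with h1 | h1 | h1 | h1
      · exact orderOf_two_ne_one hq h1
      · have hqA : q ∣ 2^p - 1 := (dvd_iff_pow_eq_one q p).mpr (by rw [← h1, pow_orderOf_eq_one])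
        have hc2 := Nat.mul_div_cancel' hqA
        obtain ⟨c, hc⟩ : ∃ c, 2^p = q*c + 1 := ⟨(2^p - 1)/q, by omega⟩
        have hsq : (∑ i ∈ Finset.range q, (2^p)^i) ≡ q [MOD q^2] := by
          simp only [hc]
          exact geom_sum_sq c hqo
        have hCSA : C ∣ ∑ i ∈ Finset.range q, (2^p)^i := ⟨2^q - 1, hCB.symm⟩
        have hq2SA : q^2 ∣ ∑ i ∈ Finset.range q, (2^p)^i := hq2d.trans hCSA
        have hzero : (∑ i ∈ Finset.range q, (2^p)^i) ≡ 0 [MOD q^2] :=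
          (Nat.modEq_zero_iff_dvd).mpr hq2SA
        have hqz : q ≡ 0 [MOD q^2] := hsq.symm.trans hzero
        have hqq : q^2 ∣ q := (Nat.modEq_zero_iff_dvd).mp hqz
        have hle := Nat.le_of_dvd (by omega) hqq
        rw [pow_two] at hle
        have h5 : q * 2 ≤ q * q := Nat.mul_le_mul_left q (by omega)
        linarith
      · rw [h1] at hcard'; omega
      · rw [h1] at hcard'
        have h5 : 1 * q ≤ p * q := Nat.mul_le_mul_right q (by omega)
        have h6 : q - 1 < 1 * q := by omega
        linarith
    have hp2 : ¬ p^2 ∣ C := by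
      intro hp2d
      have hpC : p ∣ C := (dvd_pow_self p (by norm_num : (2:ℕ) ≠ 0)).trans hp2d
      have hpN : p ∣ 2^(p*q) - 1 := hpC.trans hCN
      haveI : Fact p.Prime := ⟨hp⟩
      have h2pq : (2 : ZMod p)^(p*q) = 1 := (dvd_iff_pow_eq_one p (p*q)).mp hpN
      have he : orderOf (2 : ZMod p) ∣ p * q := orderOf_dvd_of_pow_eq_one h2pq
      have hne0 : (2 : ZMod p) ≠ 0 := by
        intro h0
        have h2 : ((2:ℕ) : ZMod p) = 0 := by exact_mod_cast h0
        have h3 := (ZMod.natCast_eq_zero_iff 2 p).mp h2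
        have := Nat.le_of_dvd (by norm_num) h3
        omega
      have hcard : orderOf (2 : ZMod p) ∣ p - 1 := ZMod.orderOf_dvd_card_sub_one hne0
      have hcard' := Nat.le_of_dvd (by omega) hcard
      rcases dvd_prime_mul_cases hp hq he with h1 | h1 | h1 | h1
      · exact orderOf_two_ne_one hp h1
      · rw [h1] at hcard'; omega
      · have hpB : p ∣ 2^q - 1 := (dvd_iff_pow_eq_one p q).mpr (by rw [← h1, pow_orderOf_eq_one])
        have hc2 := Nat.mul_div_cancel' hpB
        obtain ⟨c, hc⟩ : ∃ c, 2^q = p*c + 1 := ⟨(2^q - 1)/p, by omega⟩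
        have hsq : (∑ i ∈ Finset.range p, (2^q)^i) ≡ p [MOD p^2] := by
          simp only [hc]
          exact geom_sum_sq c hpo
        have hCSB : C ∣ ∑ i ∈ Finset.range p, (2^q)^i := ⟨2^p - 1, hCA.symm⟩
        have hp2SB : p^2 ∣ ∑ i ∈ Finset.range p, (2^q)^i := hp2d.trans hCSB
        have hzero : (∑ i ∈ Finset.range p, (2^q)^i) ≡ 0 [MOD p^2] :=
          (Nat.modEq_zero_iff_dvd).mpr hp2SB
        have hpz : p ≡ 0 [MOD p^2] := hsq.symm.trans hzero
        have hpp : p^2 ∣ p := (Nat.modEq_zero_iff_dvd).mp hpz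
        have hle := Nat.le_of_dvd (by omega) hpp
        rw [pow_two] at hle
        have h5 : p * 2 ≤ p * p := Nat.mul_le_mul_left p (by omega)
        linarith
      · rw [h1] at hcard'
        have h5 : p * 1 ≤ p * q := Nat.mul_le_mul_left p (by omega)
        have h6 : p - 1 < p * 1 := by omega
        linarith
    have hCdvd : C ∣ p * q := by
      rw [← Nat.factorization_le_iff_dvd hCne (by positivity : p * q ≠ 0)]
      rw [Finsupp.le_def]
      intro r
      by_cases hrp : r.Prime
      swap
      · simp [Nat.factorization_eq_zero_of_not_prime _ hrp]
      by_cases hrC : r ∣ C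
      swap
      · simp [Nat.factorization_eq_zero_of_not_dvd hrC]
      have hr12 : r = p ∨ r = q := by
        by_cases h : r = p
        · left; exact h
        · right; exact hex r hrp hrC h
      have hfle : C.factorization r ≤ 1 := by
        by_contra hgt
        have hdd : r^2 ∣ C := (Nat.Prime.pow_dvd_iff_le_factorization hrp hCne).mpr (by omega)
        rcases hr12 with rfl | rfl
        · exact hp2 hdd
        · exact hq2 hdd
      have hge : 1 ≤ (p*q).factorization r := by
        have hrd : r ∣ p * q := by
          rcases hr12 with rfl | rfl
          · exact Dvd.intro q rfl
          · exact Dvd.intro_left p rfl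
        have := Nat.Prime.factorization_pos_of_dvd hrp (by positivity : p * q ≠ 0) hrd
        omega
      omega
    exact absurd (Nat.le_of_dvd (by positivity) hCdvd) (by omega)

lemma key_constraint {m d r : ℕ} (hr : r.Prime) (hdodd : Odd d) (hd1 : 1 < d)
    (hdm : d ∣ m) (hm : 0 < m) (hord : orderOf (2 : ZMod r) = d)
    (h : (∏ j ∈ Finset.Icc 1 (m - 1), (2 ^ j + 1)) ≡ 1 [MOD 2 ^ m - 1]) :
    d ∣ m / d - 1 := by
  haveI : Fact r.Prime := ⟨hr⟩
  set s := m / d with hsdef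
  have hs : 0 < s := Nat.div_pos (Nat.le_of_dvd hm hdm) (by omega)
  have hms : d * s = m := Nat.mul_div_cancel' hdm
  have h2d : (2 : ZMod r)^d = 1 := by rw [← hord]; exact pow_orderOf_eq_one _
  have hrm : r ∣ 2 ^ m - 1 := (dvd_iff_pow_eq_one r m).mpr
    (by rw [← hms, pow_mul, h2d, one_pow])
  have h1 : (∏ j ∈ Finset.Icc 1 (m - 1), (2 ^ j + 1)) ≡ 1 [MOD r] :=
    Nat.ModEq.of_dvd hrm h
  have hcast : ((∏ j ∈ Finset.Icc 1 (m-1), (2^j+1) : ℕ) : ZMod r) = ((1 : ℕ) : ZMod r) :=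
    (ZMod.natCast_eq_natCast_iff _ _ _).mpr h1
  push_cast at hcast
  obtain ⟨s', hs'⟩ : ∃ s', s = s' + 1 := ⟨s - 1, by omega⟩
  rw [← hms, hs'] at hcast
  rw [prod_blocks (by omega) h2d s'] at hcast
  have hmin : ∀ j, 0 < j → j < d → (2 : ZMod r)^j ≠ 1 := by
    intro j hj1 hj2 hone
    have := orderOf_le_of_pow_eq_one hj1 hone
    omega
  have hQ : (∏ j ∈ Finset.Icc 1 (d-1), ((2:ZMod r)^j + 1)) = 1 :=
    prod_pm_one hdodd hd1 h2d hmin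
  rw [hQ, one_pow, mul_one] at hcast
  have hds' : d ∣ s' := hord ▸ orderOf_dvd_of_pow_eq_one hcast
  show d ∣ s - 1
  have : s - 1 = s' := by omega
  rw [this]
  exact hds'

theorem prime_of_prod_two_pow_add_one_modEq (m : ℕ) (hm : 2 < m)
    (h : (∏ j ∈ Finset.Icc 1 (m - 1), (2 ^ j + 1)) ≡ 1 [MOD 2 ^ m - 1]) :
    m.Prime := by
  by_contra hnp
  by_cases hev : 2 ∣ m
  · -- even case: 3 divides both the product and the modulus
    have h3P : 3 ∣ ∏ j ∈ Finset.Icc 1 (m-1), (2^j+1) := by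
      have h1 : (1:ℕ) ∈ Finset.Icc 1 (m-1) := by
        simp only [Finset.mem_Icc]; omega
      have := Finset.dvd_prod_of_mem (fun j => 2^j + 1) h1
      simpa using this
    have h3N : 3 ∣ 2^m - 1 := by
      obtain ⟨t, rfl⟩ := hev
      have h2 : (4:ℕ)^t ≡ 1^t [MOD 3] := Nat.ModEq.pow t (by decide)
      have h4 : (2:ℕ)^(2*t) = 4^t := by rw [pow_mul]; norm_num
      have h5 : (2:ℕ)^(2*t) ≡ 1 [MOD 3] := by rw [h4]; simpa using h2
      exact (Nat.modEq_iff_dvd' Nat.one_le_two_pow).mp h5.symm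
    have hP1 := Nat.ModEq.of_dvd h3N h
    have hP0 : (∏ j ∈ Finset.Icc 1 (m-1), (2^j+1)) ≡ 0 [MOD 3] :=
      (Nat.modEq_zero_iff_dvd).mpr h3P
    have h6 : (1:ℕ) ≡ 0 [MOD 3] := hP1.symm.trans hP0
    have := (Nat.modEq_zero_iff_dvd).mp h6
    omega
  · -- odd case
    have hstep : ∀ d, d.Prime → d ∣ m → d ∣ m / d - 1 := by
      intro d hd hdm
      have hd2 : d ≠ 2 := by rintro rfl; exact hev hdm
      have hdodd : Odd d := hd.odd_of_ne_two hd2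
      have hpow4 : (4:ℕ) ≤ 2^d := by
        calc (4:ℕ) = 2^2 := by norm_num
          _ ≤ 2^d := Nat.pow_le_pow_right (by norm_num) hd.two_le
      have hr : (2^d - 1).minFac.Prime := Nat.minFac_prime (by omega)
      have hord := orderOf_two_of_dvd hd hr (Nat.minFac_dvd _)
      exact key_constraint hr hdodd hd.one_lt hdm (by omega) hord h
    have hp : m.minFac.Prime := Nat.minFac_prime (by omega)
    set p := m.minFac with hpdef
    have hpm : p ∣ m := Nat.minFac_dvd m
    have hpodd : Odd p := hp.odd_of_ne_two (by rintro h2; rw [h2] at hpm; exact hev hpm)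
    have hplt : p < m := by
      rcases Nat.lt_or_ge p m with h1 | h1
      · exact h1
      · exfalso
        have := Nat.minFac_le (show 0 < m by omega)
        have : p = m := by omega
        exact hnp (this ▸ hp)
    have hpk := hstep p hp hpm
    have hmk : p * (m / p) = m := Nat.mul_div_cancel' hpm
    have hk1 : 1 < m / p := by
      rcases Nat.lt_or_ge 1 (m / p) with h1 | h1
      · exact h1
      · interval_cases h2 : (m / p)
        · omega
        · omega
    have hkm : m / p ∣ m := Nat.div_dvd_of_dvd hpm
    have hq : (m / p).minFac.Prime := Nat.minFac_prime (by omega)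
    set q := (m / p).minFac with hqdef
    have hqk : q ∣ m / p := Nat.minFac_dvd _
    have hqm : q ∣ m := hqk.trans hkm
    have hqodd : Odd q := hq.odd_of_ne_two (by rintro h2; rw [h2] at hqm; exact hev hqm)
    have hqp : q ≠ p := by
      intro hqe
      have hqk' : p ∣ m / p := hqe ▸ hqk
      have h2 : p ∣ m / p - (m / p - 1) := Nat.dvd_sub hqk' hpk
      have h3 : m / p - (m / p - 1) = 1 := by omega
      rw [h3] at h2
      have := Nat.le_of_dvd (by norm_num) h2
      have := hp.two_le
      omega
    have hqm2 := hstep q hq hqm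
    have hcoppq : Nat.Coprime p q := (Nat.coprime_primes hp hq).mpr (Ne.symm hqp)
    have hpqm : p * q ∣ m := hcoppq.mul_dvd_of_dvd_of_dvd hpm hqm
    -- primitive prime for p*q
    obtain ⟨r, hr, hordr⟩ : ∃ r : ℕ, r.Prime ∧ orderOf (2 : ZMod r) = p * q := by
      rcases Nat.lt_or_ge p q with h1 | h1
      · exact exists_primitive hp hq hpodd hqodd h1
      · have h2 : q < p := by omega
        obtain ⟨r, hr, ho⟩ := exists_primitive hq hp hqodd hpodd h2
        exact ⟨r, hr, by rw [mul_comm] at ho; exact ho⟩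
    have h4pq : 4 ≤ p * q := le_trans (by norm_num) (Nat.mul_le_mul hp.two_le hq.two_le)
    have hpq1 : 1 < p * q := by omega
    have h3 := key_constraint hr (hpodd.mul hqodd) hpq1 hpqm (by omega) hordr h
    -- final arithmetic
    set t := m / (p * q) with htdef
    have hmt : p * q * t = m := Nat.mul_div_cancel' hpqm
    have ht1 : 1 ≤ t := by
      rcases Nat.eq_zero_or_pos t with h0 | h0
      · rw [h0] at hmt; omega
      · exact h0
    have hmp : m / p = q * t := by
      rw [← hmt, mul_assoc, Nat.mul_div_cancel_left _ hp.pos]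
    have hmq : m / q = p * t := by
      have : p * q * t = q * (p * t) := by ring
      rw [← hmt, this, Nat.mul_div_cancel_left _ hq.pos]
    rw [hmp] at hpk
    rw [hmq] at hqm2
    -- cast to ℤ
    have hqt1 : 1 ≤ q * t := le_trans ht1 (Nat.le_mul_of_pos_left t hq.pos)
    have hpt1 : 1 ≤ p * t := le_trans ht1 (Nat.le_mul_of_pos_left t hp.pos)
    have hA : (p:ℤ) ∣ (q:ℤ) * t - 1 := by
      have := Int.natCast_dvd_natCast.mpr hpk
      push_cast [hqt1] at this
      exact this
    have hB : (q:ℤ) ∣ (p:ℤ) * t - 1 := by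
      have := Int.natCast_dvd_natCast.mpr hqm2
      push_cast [hpt1] at this
      exact this
    have hT : (p*q:ℤ) ∣ (t:ℤ) - 1 := by
      have := Int.natCast_dvd_natCast.mpr h3
      push_cast [ht1] at this
      exact this
    have hTp : (p:ℤ) ∣ (t:ℤ) - 1 := dvd_trans ⟨q, by push_cast; ring⟩ hT
    have hTq : (q:ℤ) ∣ (t:ℤ) - 1 := dvd_trans ⟨p, by push_cast; ring⟩ hT
    have hpq1' : (p:ℤ) ∣ (q:ℤ) - 1 := by
      have h9 : ((q:ℤ)*t - 1) - (q:ℤ)*((t:ℤ)-1) = q - 1 := by ring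
      rw [← h9]
      exact dvd_sub hA (hTp.mul_left q)
    have hqp1' : (q:ℤ) ∣ (p:ℤ) - 1 := by
      have h9 : ((p:ℤ)*t - 1) - (p:ℤ)*((t:ℤ)-1) = p - 1 := by ring
      rw [← h9]
      exact dvd_sub hB (hTq.mul_left p)
    have hp3 : 3 ≤ p := by
      obtain ⟨u, hu⟩ := hpodd; have := hp.two_le; omega
    have hq3 : 3 ≤ q := by
      obtain ⟨u, hu⟩ := hqodd; have := hq.two_le; omega
    have hle1 : (p:ℤ) ≤ (q:ℤ) - 1 := Int.le_of_dvd (by push_cast; omega) hpq1'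
    have hle2 : (q:ℤ) ≤ (p:ℤ) - 1 := Int.le_of_dvd (by push_cast; omega) hqp1'
    have : (p:ℤ) ≤ (p:ℤ) - 2 := by omega
    omega
end

section
/- Let M be a natural number with M > 1 and let m be a natural number with m > 2. Then m is prime if and only if ∏_{j=1}^{m-1} (M^j + 1) ≡ 1 (mod (M^m − 1)/(M − 1)). -/
open Polynomial Finset

private lemma geom_div_eq (M m : ℕ) (hM : 1 < M) :
    (M ^ m - 1) / (M - 1) = ∑ i ∈ Finset.range m, M ^ i := by
  have h1 : 1 ≤ M := hM.le
  have hkey : M ^ m - 1 = (∑ i ∈ Finset.range m, M ^ i) * (M - 1) := by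
    have hz : ((M : ℤ) ^ m - 1) = (∑ i ∈ Finset.range m, (M : ℤ) ^ i) * ((M : ℤ) - 1) :=
      (geom_sum_mul (M : ℤ) m).symm
    have h1m : 1 ≤ M ^ m := Nat.one_le_pow _ _ (by omega)
    apply Nat.cast_injective (R := ℤ)
    push_cast [Nat.cast_sub h1m, Nat.cast_sub h1]
    push_cast at hz
    linarith [hz]
  rw [hkey, Nat.mul_div_cancel _ (by omega : 0 < M - 1)]

private lemma cyclo_dvd_prod_sub_one {n : ℕ} (hn : Odd n) (h1 : 1 < n) :
    cyclotomic n ℤ ∣ (∏ j ∈ Finset.Ico 1 n, ((X : ℤ[X]) ^ j + 1)) - 1 := by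
  have hpos : 0 < n := by omega
  set ζ : ℂ := Complex.exp (2 * Real.pi * Complex.I / n) with hζdef
  have hζ : IsPrimitiveRoot ζ n := Complex.isPrimitiveRoot_exp n hpos.ne'
  have himg : (Finset.range n).image (fun j => ζ ^ j) = Polynomial.nthRootsFinset n (1 : ℂ) := by
    apply Finset.eq_of_subset_of_card_le
    · intro x hx
      simp only [Finset.mem_image, Finset.mem_range] at hx
      obtain ⟨j, hj, rfl⟩ := hx
      exact (Polynomial.mem_nthRootsFinset hpos _).2
        (by rw [← pow_mul, mul_comm, pow_mul, hζ.pow_eq_one, one_pow])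
    · rw [hζ.card_nthRootsFinset, Finset.card_image_of_injOn ?_]
      · simp
      · intro i hi j hj hij
        exact hζ.pow_inj (Finset.mem_range.1 hi) (Finset.mem_range.1 hj) hij
  have hprodroots : ∀ x : ℂ, ∏ j ∈ Finset.range n, (x - ζ ^ j) = x ^ n - 1 := by
    intro x
    have h := congrArg (Polynomial.eval x) (Polynomial.X_pow_sub_one_eq_prod hpos hζ)
    simp only [Polynomial.eval_sub, Polynomial.eval_pow, Polynomial.eval_X, Polynomial.eval_one,
      Polynomial.eval_prod, Polynomial.eval_C] at h
    rw [← himg, Finset.prod_image (fun i hi j hj hij =>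
      hζ.pow_inj (Finset.mem_range.1 hi) (Finset.mem_range.1 hj) hij)] at h
    exact h.symm
  have h2 : ∏ j ∈ Finset.Ico 1 n, ((-1 : ℂ) - ζ ^ j) = 1 := by
    have h0 := hprodroots (-1)
    rw [hn.neg_one_pow, Finset.range_eq_Ico, Finset.prod_eq_prod_Ico_succ_bot hpos] at h0
    simp only [pow_zero] at h0
    have hne : ((-1 : ℂ) - 1) ≠ 0 := by norm_num
    have : ((-1 : ℂ) - 1) * ∏ j ∈ Finset.Ico 1 n, ((-1 : ℂ) - ζ ^ j)
        = ((-1 : ℂ) - 1) * 1 := by rw [mul_one]; linear_combination h0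
    exact mul_left_cancel₀ hne this
  have hprod1 : ∏ j ∈ Finset.Ico 1 n, (ζ ^ j + 1) = 1 := by
    have hre : ∏ j ∈ Finset.Ico 1 n, (ζ ^ j + 1)
        = ∏ j ∈ Finset.Ico 1 n, (-1 : ℂ) * ((-1 : ℂ) - ζ ^ j) := by
      apply Finset.prod_congr rfl; intro j _; ring
    rw [hre, Finset.prod_mul_distrib, h2, mul_one, Finset.prod_const, Nat.card_Ico]
    exact Even.neg_one_pow (Nat.Odd.sub_odd hn odd_one)
  have haev : (Polynomial.aeval ζ) ((∏ j ∈ Finset.Ico 1 n, ((X : ℤ[X]) ^ j + 1)) - 1) = 0 := by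
    simp only [map_sub, map_prod, map_add, map_pow, Polynomial.aeval_X, map_one]
    rw [hprod1]; ring
  have hq : cyclotomic n ℚ ∣
      ((∏ j ∈ Finset.Ico 1 n, ((X : ℤ[X]) ^ j + 1)) - 1).map (Int.castRingHom ℚ) := by
    rw [cyclotomic_eq_minpoly_rat hζ hpos]
    apply minpoly.dvd
    rw [show (Int.castRingHom ℚ) = algebraMap ℤ ℚ from rfl, Polynomial.aeval_map_algebraMap]
    exact haev
  rwa [← Polynomial.map_cyclotomic_int n ℚ,
    Polynomial.map_dvd_map _ Int.cast_injective (Polynomial.cyclotomic.monic n ℤ)] at hq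

private lemma pow_sub_one_dvd_aux (d : ℕ) (hd : 0 < d) (k : ℕ) (hk : 0 < k) :
    ((X : ℤ[X]) ^ d - 1) ∣ (∏ j ∈ Finset.Ico 1 (d * k), ((X : ℤ[X]) ^ j + 1))
      - 2 ^ (k - 1) * (∏ j ∈ Finset.Ico 1 d, ((X : ℤ[X]) ^ j + 1)) ^ k := by
  set I : Ideal ℤ[X] := Ideal.span {(X : ℤ[X]) ^ d - 1} with hI
  set π : ℤ[X] →+* ℤ[X] ⧸ I := Ideal.Quotient.mk I with hπ
  have hmem : ((X : ℤ[X]) ^ d - 1) ∈ I := Ideal.subset_span rfl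
  have hx : (π X) ^ d = 1 := by
    have h0 : π ((X : ℤ[X]) ^ d - 1) = 0 := Ideal.Quotient.eq_zero_iff_mem.2 hmem
    rw [map_sub, map_pow, map_one, sub_eq_zero] at h0
    exact h0
  have key : ∀ k : ℕ, 0 < k →
      π (∏ j ∈ Finset.Ico 1 (d * k), ((X : ℤ[X]) ^ j + 1))
        = 2 ^ (k - 1) * (π (∏ j ∈ Finset.Ico 1 d, ((X : ℤ[X]) ^ j + 1))) ^ k := by
    intro k hk
    induction k with
    | zero => omega
    | succ k ih =>
      rcases Nat.eq_zero_or_pos k with hk0 | hk0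
      · subst hk0; simp
      · have h1k : (1 : ℕ) ≤ d * k := Nat.one_le_iff_ne_zero.2 (by positivity)
        have h2k : d * k ≤ d * (k + 1) := by nlinarith
        rw [← Finset.prod_Ico_consecutive _ h1k h2k, map_mul, ih hk0]
        have hseg : π (∏ j ∈ Finset.Ico (d * k) (d * (k + 1)), ((X : ℤ[X]) ^ j + 1))
            = 2 * π (∏ j ∈ Finset.Ico 1 d, ((X : ℤ[X]) ^ j + 1)) := by
          rw [Finset.prod_Ico_eq_prod_range]
          have hdd : d * (k + 1) - d * k = d := by ring_nf; omega
          rw [hdd, map_prod]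
          have hterm : ∀ i, π ((X : ℤ[X]) ^ (d * k + i) + 1) = (π X) ^ i + 1 := by
            intro i
            rw [map_add, map_pow, map_one, pow_add, pow_mul, hx, one_pow, one_mul]
          calc ∏ i ∈ Finset.range d, π ((X : ℤ[X]) ^ (d * k + i) + 1)
              = ∏ i ∈ Finset.range d, ((π X) ^ i + 1) := Finset.prod_congr rfl fun i _ => hterm i
            _ = ((π X) ^ 0 + 1) * ∏ i ∈ Finset.Ico 1 d, ((π X) ^ i + 1) := by
                rw [Finset.range_eq_Ico, Finset.prod_eq_prod_Ico_succ_bot hd]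
            _ = 2 * π (∏ j ∈ Finset.Ico 1 d, ((X : ℤ[X]) ^ j + 1)) := by
                rw [map_prod]
                simp only [pow_zero, map_add, map_pow, map_one]
                norm_num
        rw [hseg]
        have hkk : k + 1 - 1 = (k - 1) + 1 := by omega
        rw [hkk, pow_succ, pow_succ]
        ring
  have h0 : π ((∏ j ∈ Finset.Ico 1 (d * k), ((X : ℤ[X]) ^ j + 1))
      - 2 ^ (k - 1) * (∏ j ∈ Finset.Ico 1 d, ((X : ℤ[X]) ^ j + 1)) ^ k) = 0 := by
    rw [map_sub, map_mul, map_pow, map_pow, key k hk,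
      show π 2 = 2 from map_ofNat π 2]
    ring
  rw [← Ideal.mem_span_singleton]
  exact Ideal.Quotient.eq_zero_iff_mem.1 h0

private lemma cyclo_dvd_geom_sum {d m : ℕ} (hd : 1 < d) (hodd : Odd d) (hdvd : d ∣ m) :
    cyclotomic d ℤ ∣ ∑ i ∈ Finset.range m, (X : ℤ[X]) ^ i := by
  have hd3 : 2 < d := by
    rcases hodd with ⟨r, hr⟩; omega
  have htot : 2 ≤ d.totient := by
    have he := Nat.totient_even hd3
    have hp := Nat.totient_pos.2 (by omega : 0 < d)
    rcases he with ⟨r, hr⟩; omega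
  have hdvd1 : cyclotomic d ℤ ∣ (X : ℤ[X]) ^ m - 1 := by
    obtain ⟨c, rfl⟩ := hdvd
    refine (Polynomial.cyclotomic.dvd_X_pow_sub_one d ℤ).trans ?_
    have := sub_dvd_pow_sub_pow ((X : ℤ[X]) ^ d) 1 c
    rwa [one_pow, ← pow_mul] at this
  have hfac : ((∑ i ∈ Finset.range m, (X : ℤ[X]) ^ i)) * ((X : ℤ[X]) - 1)
      = (X : ℤ[X]) ^ m - 1 := geom_sum_mul _ m
  have hprime : Prime (cyclotomic d ℤ) :=
    UniqueFactorizationMonoid.irreducible_iff_prime.1 (cyclotomic.irreducible (by omega))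
  rcases hprime.2.2 _ _ (hfac ▸ hdvd1) with h | h
  · exact h
  · exfalso
    have hne : ((X : ℤ[X]) - 1) ≠ 0 := by
      intro h0
      have := congrArg (Polynomial.eval 2) h0
      simp at this
    have hle := Polynomial.natDegree_le_of_dvd h hne
    rw [Polynomial.natDegree_cyclotomic] at hle
    have : natDegree ((X : ℤ[X]) - 1) = 1 := by
      rw [show ((X : ℤ[X]) - 1) = X - C 1 by simp, Polynomial.natDegree_X_sub_C]
    omega

theorem prime_iff_prod_pow_add_one_modEq (M m : ℕ) (hM : 1 < M) (hm : 2 < m) :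
    m.Prime ↔
      (∏ j ∈ Finset.Icc 1 (m - 1), (M ^ j + 1)) ≡ 1 [MOD (M ^ m - 1) / (M - 1)] := by
  have hIcc : Finset.Icc 1 (m - 1) = Finset.Ico 1 m := by
    rw [← Finset.Ico_add_one_right_eq_Icc]; congr 1; omega
  have hN : (M ^ m - 1) / (M - 1) = ∑ i ∈ Finset.range m, M ^ i := geom_div_eq M m hM
  set N := (M ^ m - 1) / (M - 1) with hNdef
  set Pn := ∏ j ∈ Finset.Icc 1 (m - 1), (M ^ j + 1) with hPdef
  have hPz : (Pn : ℤ) = ∏ j ∈ Finset.Ico 1 m, ((M : ℤ) ^ j + 1) := by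
    rw [hPdef, hIcc]; push_cast; rfl
  have hNz : (N : ℤ) = ∑ i ∈ Finset.range m, (M : ℤ) ^ i := by
    rw [hN]; push_cast; rfl
  have hevP : ∀ s : Finset ℕ,
      Polynomial.eval (M : ℤ) (∏ j ∈ s, ((X : ℤ[X]) ^ j + 1)) = ∏ j ∈ s, ((M : ℤ) ^ j + 1) := by
    intro s; simp [Polynomial.eval_prod]
  have hevS : Polynomial.eval (M : ℤ) (∑ i ∈ Finset.range m, (X : ℤ[X]) ^ i)
      = ∑ i ∈ Finset.range m, (M : ℤ) ^ i := by
    simp [Polynomial.eval_finset_sum]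
  have hmodeq : (Pn ≡ 1 [MOD N]) ↔ (N : ℤ) ∣ (Pn : ℤ) - 1 := by
    rw [Nat.modEq_iff_dvd]
    push_cast
    exact dvd_sub_comm
  constructor
  · intro hmp
    haveI := Fact.mk hmp
    have hodd : Odd m := hmp.odd_of_ne_two (by omega)
    have hdvd2 : Polynomial.eval (M : ℤ) (cyclotomic m ℤ) ∣
        Polynomial.eval (M : ℤ) ((∏ j ∈ Finset.Ico 1 m, ((X : ℤ[X]) ^ j + 1)) - 1) :=
      Polynomial.eval_dvd (cyclo_dvd_prod_sub_one hodd (by omega))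
    rw [Polynomial.eval_sub, Polynomial.eval_one, hevP,
      Polynomial.cyclotomic_prime ℤ m, hevS] at hdvd2
    rw [hmodeq, hPz, hNz]
    exact hdvd2
  · intro hcong
    by_contra hnp
    have hNdvd : (N : ℤ) ∣ (Pn : ℤ) - 1 := hmodeq.1 hcong
    have hMz : (1 : ℤ) < (M : ℤ) := by exact_mod_cast hM
    rcases Nat.even_or_odd m with hme | hmo
    · -- m even : the factor M^(m/2)+1 divides both N and Pn
      obtain ⟨t, ht⟩ := hme
      have ht2 : 2 ≤ t := by omega
      have hMne : ((M : ℤ) - 1) ≠ 0 := by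
        intro h; rw [sub_eq_zero] at h; omega
      have e1 := geom_sum_mul (M : ℤ) m
      have e2 := geom_sum_mul (M : ℤ) t
      have hmm : (M : ℤ) ^ m = ((M : ℤ) ^ t) ^ 2 := by
        rw [← pow_mul]; congr 1; omega
      have hsplit : (∑ i ∈ Finset.range m, (M : ℤ) ^ i)
          = (∑ i ∈ Finset.range t, (M : ℤ) ^ i) * ((M : ℤ) ^ t + 1) := by
        apply mul_right_cancel₀ hMne
        rw [e1, mul_right_comm, e2, show m = t + t from ht, pow_add]
        ring
      have hBN : ((M : ℤ) ^ t + 1) ∣ (N : ℤ) := by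
        rw [hNz, hsplit]; exact Dvd.intro_left _ rfl
      have hBP : ((M : ℤ) ^ t + 1) ∣ (Pn : ℤ) := by
        rw [hPz]
        exact Finset.dvd_prod_of_mem _ (by simp only [Finset.mem_Ico]; omega)
      have hB1 : ((M : ℤ) ^ t + 1) ∣ 1 := by
        have h := dvd_sub hBP (hBN.trans hNdvd)
        simpa using h
      have hle := Int.le_of_dvd one_pos hB1
      have hMt : (2 : ℤ) ≤ (M : ℤ) ^ t := by
        calc (2 : ℤ) ≤ (M : ℤ) := by omega
          _ ≤ (M : ℤ) ^ t := le_self_pow₀ (by omega) (by omega)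
      omega
    · -- m odd composite
      set p := m.minFac with hpdef
      have hp : p.Prime := Nat.minFac_prime (by omega)
      have hpdvd : p ∣ m := Nat.minFac_dvd m
      set d := m / p with hddef
      have hdm : d * p = m := Nat.div_mul_cancel hpdvd
      have hdm' : m = d * p := hdm.symm
      have hdodd : Odd d := by
        rcases Nat.even_or_odd d with hde | hdo
        · exfalso
          obtain ⟨u, hu⟩ := hde
          exact (Nat.not_even_iff_odd.2 hmo) ⟨u * p, by rw [← hdm, hu]; ring⟩
        · exact hdo
      have hpodd : Odd p := hp.odd_of_ne_two (by
        intro h2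
        exact (Nat.not_even_iff_odd.2 hmo) ⟨d, by rw [← hdm, h2]; ring⟩)
      have hp3 : 3 ≤ p := by
        have := hp.two_le
        rcases hpodd with ⟨u, hu⟩; omega
      have hd1 : 1 < d := by
        have hd0 : 0 < d := Nat.div_pos (Nat.minFac_le (by omega)) hp.pos
        have hdne1 : d ≠ 1 := by
          intro h1
          exact hnp (by rw [← hdm, h1, one_mul]; exact hp)
        omega
      set c : ℤ := Polynomial.eval (M : ℤ) (cyclotomic d ℤ) with hcdef
      have hcN : c ∣ (N : ℤ) := by
        have h := Polynomial.eval_dvd (x := (M : ℤ)) (cyclo_dvd_geom_sum hd1 hdodd ⟨p, hdm'⟩)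
        rwa [hevS, ← hNz] at h
      set Qz : ℤ := ∏ j ∈ Finset.Ico 1 d, ((M : ℤ) ^ j + 1) with hQdef
      have hcyc_dvd : cyclotomic d ℤ ∣ ((X : ℤ[X]) ^ d - 1) :=
        Polynomial.cyclotomic.dvd_X_pow_sub_one d ℤ
      have h1 : c ∣ (Pn : ℤ) - 2 ^ (p - 1) * Qz ^ p := by
        have hdvd := hcyc_dvd.trans (pow_sub_one_dvd_aux d (by omega) p hp.pos)
        have h := Polynomial.eval_dvd (x := (M : ℤ)) hdvd
        rw [hdm] at h
        simp only [Polynomial.eval_sub, Polynomial.eval_mul, Polynomial.eval_pow,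
          Polynomial.eval_ofNat] at h
        rwa [hevP, hevP, ← hPz, ← hQdef] at h
      have hQ1 : c ∣ Qz - 1 := by
        have h := Polynomial.eval_dvd (x := (M : ℤ)) (cyclo_dvd_prod_sub_one hdodd hd1)
        rwa [Polynomial.eval_sub, Polynomial.eval_one, hevP, ← hQdef] at h
      have hQp : c ∣ Qz ^ p - 1 :=
        hQ1.trans (by simpa using sub_dvd_pow_sub_pow Qz 1 p)
      have hP1 : c ∣ (Pn : ℤ) - 1 := hcN.trans hNdvd
      have hfin : c ∣ (2 : ℤ) ^ (p - 1) - 1 := by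
        have hrw : (2 : ℤ) ^ (p - 1) - 1
            = (((Pn : ℤ) - 1) - ((Pn : ℤ) - 2 ^ (p - 1) * Qz ^ p)) - 2 ^ (p - 1) * (Qz ^ p - 1) := by
          ring
        rw [hrw]
        exact dvd_sub (dvd_sub hP1 h1) (Dvd.dvd.mul_left hQp _)
      have h2pos : (0 : ℤ) < 2 ^ (p - 1) - 1 := by
        have h21 : (2 : ℤ) ^ 1 ≤ 2 ^ (p - 1) := pow_le_pow_right₀ (by norm_num) (by omega)
        simp only [pow_one] at h21
        omega
      have hcle : c ≤ 2 ^ (p - 1) - 1 := Int.le_of_dvd h2pos hfin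
      -- lower bound on c
      have hd2 : 2 ≤ d := hd1
      have hMR : (1 : ℝ) < (M : ℝ) := by exact_mod_cast hM
      have hbound := Polynomial.sub_one_pow_totient_lt_cyclotomic_eval hd2 hMR
      have hcast : (Polynomial.cyclotomic d ℝ).eval ((M : ℤ) : ℝ) = (c : ℝ) := by
        rw [← Polynomial.map_cyclotomic_int d ℝ, Polynomial.eval_intCast_map]
        rfl
      have hcgtZ : ((M : ℤ) - 1) ^ d.totient < c := by
        have hMcast : (((M : ℤ) : ℝ)) = ((M : ℕ) : ℝ) := by push_cast; rfl
        rw [hMcast] at hcast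
        rw [hcast] at hbound
        have hb2 : ((((M : ℤ) - 1) ^ d.totient : ℤ) : ℝ) < ((c : ℤ) : ℝ) := by
          push_cast
          exact hbound
        exact_mod_cast hb2
      -- totient lower bound
      have hq0 : d.minFac.Prime := Nat.minFac_prime (by omega)
      have hq0d : d.minFac ∣ d := Nat.minFac_dvd d
      have hpq0 : p ≤ d.minFac := Nat.minFac_le_of_dvd hq0.two_le (hq0d.trans ⟨p, hdm'⟩)
      have htot1 : d.minFac - 1 ≤ d.totient := by
        have hdv := Nat.totient_dvd_of_dvd hq0d
        rw [Nat.totient_prime hq0] at hdv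
        exact Nat.le_of_dvd (Nat.totient_pos.2 (by omega)) hdv
      have htot : p - 1 ≤ d.totient := by omega
      rcases eq_or_lt_of_le (show 2 ≤ M by omega) with hM2 | hM3
      · -- M = 2 : order argument
        have hMint : (M : ℤ) = 2 := by exact_mod_cast hM2.symm
        have hc2d : c ∣ (2 : ℤ) ^ d - 1 := by
          have h := Polynomial.eval_dvd (x := (M : ℤ)) hcyc_dvd
          rw [Polynomial.eval_sub, Polynomial.eval_pow, Polynomial.eval_X,
            Polynomial.eval_one] at h
          rw [hcdef, hMint]
          rwa [hMint] at h
        have hc1 : 1 < c := by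
          rw [hMint] at hcgtZ
          have : (1 : ℤ) ≤ ((2 : ℤ) - 1) ^ d.totient := by norm_num
          omega
        set cn := c.toNat with hcndef
        have hcn : (cn : ℤ) = c := Int.toNat_of_nonneg (by omega)
        have hcn2 : 2 ≤ cn := by omega
        set r := cn.minFac with hrdef
        have hr : r.Prime := Nat.minFac_prime (by omega)
        haveI := Fact.mk hr
        have hrc : (r : ℤ) ∣ c := by
          rw [← hcn]; exact_mod_cast Nat.minFac_dvd cn
        have hr1 : (r : ℤ) ∣ (2 : ℤ) ^ (p - 1) - 1 := hrc.trans hfin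
        have hr2 : (r : ℤ) ∣ (2 : ℤ) ^ d - 1 := hrc.trans hc2d
        have hz1 : (2 : ZMod r) ^ (p - 1) = 1 := by
          have h := (ZMod.intCast_zmod_eq_zero_iff_dvd _ r).2 hr1
          push_cast at h
          rwa [sub_eq_zero] at h
        have hz2 : (2 : ZMod r) ^ d = 1 := by
          have h := (ZMod.intCast_zmod_eq_zero_iff_dvd _ r).2 hr2
          push_cast at h
          rwa [sub_eq_zero] at h
        have ho1 : orderOf (2 : ZMod r) ∣ p - 1 := orderOf_dvd_of_pow_eq_one hz1
        have ho2 : orderOf (2 : ZMod r) ∣ d := orderOf_dvd_of_pow_eq_one hz2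
        have hcop : Nat.gcd d (p - 1) = 1 := by
          by_contra hg
          have hs : (Nat.gcd d (p - 1)).minFac.Prime := Nat.minFac_prime hg
          have hsd : (Nat.gcd d (p - 1)).minFac ∣ d :=
            (Nat.minFac_dvd _).trans (Nat.gcd_dvd_left _ _)
          have hsp1 : (Nat.gcd d (p - 1)).minFac ∣ p - 1 :=
            (Nat.minFac_dvd _).trans (Nat.gcd_dvd_right _ _)
          have hps : p ≤ (Nat.gcd d (p - 1)).minFac :=
            Nat.minFac_le_of_dvd hs.two_le (hsd.trans ⟨p, hdm'⟩)
          have hle2 : (Nat.gcd d (p - 1)).minFac ≤ p - 1 := Nat.le_of_dvd (by omega) hsp1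
          omega
        have hord1 : orderOf (2 : ZMod r) = 1 :=
          Nat.dvd_one.1 (by have h := Nat.dvd_gcd ho2 ho1; rwa [hcop] at h)
        have h21 : (2 : ZMod r) = 1 := orderOf_eq_one_iff.1 hord1
        have h21' : ((2 : ℕ) : ZMod r) = ((1 : ℕ) : ZMod r) := by push_cast; exact h21
        have hmod := (ZMod.natCast_eq_natCast_iff _ _ _).1 h21'
        have hrd1 : r ∣ 1 := (Nat.modEq_iff_dvd' (by norm_num)).1 hmod.symm
        have := Nat.le_of_dvd one_pos hrd1
        have := hr.two_le
        omega
      · -- 3 ≤ M : size argument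
        have hM3z : (3 : ℤ) ≤ (M : ℤ) := by exact_mod_cast hM3
        have hlow : (2 : ℤ) ^ (p - 1) ≤ ((M : ℤ) - 1) ^ d.totient := by
          calc (2 : ℤ) ^ (p - 1) ≤ 2 ^ d.totient := pow_le_pow_right₀ (by norm_num) htot
            _ ≤ ((M : ℤ) - 1) ^ d.totient := pow_le_pow_left₀ (by norm_num) (by omega) _
        omega
end

section
/- Let M be a natural number with M > 1. If m is an odd prime, then ∏_{j=1}^{m-1} (M^j + 1) ≡ 1 (mod (M^m − 1)/(M − 1)). -/
open Polynomial Finset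

private lemma range_eq_insert (m : ℕ) (hm : 2 ≤ m) :
    Finset.range m = insert 0 (Finset.Icc 1 (m - 1)) := by
  ext i
  simp only [Finset.mem_range, Finset.mem_insert, Finset.mem_Icc]
  omega

private lemma prod_zeta (m : ℕ) (hm : 3 ≤ m) (hodd : Odd m) {ζ : ℂ}
    (hζ : IsPrimitiveRoot ζ m) :
    (∏ j ∈ Finset.Icc 1 (m - 1), (ζ ^ j + 1)) = 1 := by
  have hm0 : 0 < m := by omega
  have : NeZero m := ⟨hm0.ne'⟩
  have key : (∏ i ∈ Finset.range m, (ζ ^ i + 1)) = 2 := by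
    have hfac := Polynomial.X_pow_sub_one_eq_prod hm0 hζ
    have hev := congrArg (Polynomial.eval (-1 : ℂ)) hfac
    simp only [eval_sub, eval_pow, eval_X, eval_one, eval_prod, eval_sub, eval_C] at hev
    rw [hodd.neg_one_pow] at hev
    have hbij : (∏ ξ ∈ Polynomial.nthRootsFinset m (1 : ℂ), ((-1 : ℂ) - ξ)) =
        ∏ i ∈ Finset.range m, ((-1 : ℂ) - ζ ^ i) := by
      refine (Finset.prod_bij (fun i _ => ζ ^ i) ?_ ?_ ?_ ?_).symm
      · intro i hi
        exact (Polynomial.mem_nthRootsFinset hm0 (1 : ℂ)).2 (by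
          rw [← pow_mul, mul_comm, pow_mul, hζ.pow_eq_one, one_pow])
      · intro i hi j hj h
        exact hζ.pow_inj (Finset.mem_range.1 hi) (Finset.mem_range.1 hj) h
      · intro ξ hξ
        obtain ⟨i, hi, hiξ⟩ := hζ.eq_pow_of_pow_eq_one ((Polynomial.mem_nthRootsFinset hm0 (1 : ℂ)).1 hξ)
        exact ⟨i, Finset.mem_range.2 hi, hiξ⟩
      · intro i hi; rfl
    rw [hbij] at hev
    have hneg : ∀ i ∈ Finset.range m, ((-1 : ℂ) - ζ ^ i) = (-1) * (ζ ^ i + 1) := by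
      intro i _; ring
    rw [Finset.prod_congr rfl hneg, Finset.prod_mul_distrib, Finset.prod_const,
      Finset.card_range, hodd.neg_one_pow, neg_one_mul] at hev
    -- hev : -1 - 1 = -(∏ ...)
    have : (∏ i ∈ Finset.range m, (ζ ^ i + 1)) = -(-1 - 1) := by rw [hev]; ring
    rw [this]; ring
  rw [range_eq_insert m (by omega), Finset.prod_insert (by simp)] at key
  simp only [pow_zero] at key
  have h2 : (1 : ℂ) + 1 = 2 := by norm_num
  rw [h2] at key
  exact mul_left_cancel₀ (two_ne_zero) (by rw [key, mul_one])

private lemma cyclo_dvd (m : ℕ) (hp : m.Prime) (hodd : Odd m) :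
    (∑ i ∈ Finset.range m, (Polynomial.X : ℤ[X]) ^ i) ∣
      (∏ j ∈ Finset.Icc 1 (m - 1), ((Polynomial.X : ℤ[X]) ^ j + 1)) - 1 := by
  have hm0 : m ≠ 0 := hp.ne_zero
  have hm3 : 3 ≤ m := by
    have h2 := hp.two_le
    have : m ≠ 2 := by rintro rfl; exact absurd hodd (by decide)
    omega
  set ζ : ℂ := Complex.exp (2 * Real.pi * Complex.I / m)
  have hζ : IsPrimitiveRoot ζ m := Complex.isPrimitiveRoot_exp m hm0
  have hint : IsIntegral ℤ ζ := hζ.isIntegral (by omega)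
  have haev : (Polynomial.aeval ζ)
      ((∏ j ∈ Finset.Icc 1 (m - 1), ((Polynomial.X : ℤ[X]) ^ j + 1)) - 1) = 0 := by
    simp only [map_sub, map_prod, map_add, map_pow, map_one, Polynomial.aeval_X]
    rw [prod_zeta m hm3 hodd hζ]
    ring
  haveI : Fact m.Prime := ⟨hp⟩
  have hdvd := minpoly.isIntegrallyClosed_dvd hint haev
  rwa [← Polynomial.cyclotomic_eq_minpoly hζ (by omega), Polynomial.cyclotomic_prime ℤ m]
    at hdvd

theorem prod_pow_add_one_modEq_of_odd_prime (M m : ℕ) (hM : 1 < M)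
    (hp : m.Prime) (hodd : Odd m) :
    (∏ j ∈ Finset.Icc 1 (m - 1), (M ^ j + 1)) ≡ 1 [MOD (M ^ m - 1) / (M - 1)] := by
  have hm2 : 2 ≤ m := hp.two_le
  set N : ℕ := ∑ i ∈ Finset.range m, M ^ i with hN
  have hMm : 1 ≤ M ^ m := Nat.one_le_pow _ _ (by omega)
  have hNval : (M ^ m - 1) / (M - 1) = N := by
    have hmul : N * (M - 1) = M ^ m - 1 := by
      have : (N : ℤ) * ((M : ℤ) - 1) = (M : ℤ) ^ m - 1 := by
        have := geom_sum_mul (M : ℤ) m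
        simpa [hN] using this
      have h1 : ((M : ℕ) - 1 : ℕ) = ((M : ℤ) - 1 : ℤ) := by
        push_cast [Nat.cast_sub (by omega : 1 ≤ M)]; ring_nf
      zify [hMm, (by omega : 1 ≤ M)]
      exact this
    rw [← hmul, Nat.mul_div_cancel _ (by omega : 0 < M - 1)]
  rw [hNval]
  set P : ℕ := ∏ j ∈ Finset.Icc 1 (m - 1), (M ^ j + 1) with hP
  have hP1 : 1 ≤ P := Nat.one_le_iff_ne_zero.2 (by
    rw [hP]
    exact Finset.prod_ne_zero_iff.2 fun j _ => by positivity)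
  have hdvdZ : (N : ℤ) ∣ (P : ℤ) - 1 := by
    have := cyclo_dvd m hp hodd
    have hev := Polynomial.eval_dvd (x := (M : ℤ)) this
    simpa [hN, hP, Polynomial.eval_prod, Polynomial.eval_finset_sum] using hev
  have hdvdN : N ∣ P - 1 := by
    have : ((P - 1 : ℕ) : ℤ) = (P : ℤ) - 1 := by
      push_cast [Nat.cast_sub hP1]; ring
    rwa [← Int.natCast_dvd_natCast, this]
  exact ((Nat.modEq_iff_dvd' hP1).2 hdvdN).symm
end

section
/- Let M be a natural number with M > 1 and let m be a natural number with m > 2. If ∏_{j=1}^{m-1} (M^j + 1) ≡ 1 (mod (M^m − 1)/(M − 1)), then m is prime. -/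
open Polynomial Finset

-- product of (1 + ζ^r) over r = 1..e-1 equals 1, for odd e, ζ primitive e-th root
lemma prod_one_add_pow (e : ℕ) (he : 1 < e) (ho : Odd e) {ζ : ℂ}
    (hζ : IsPrimitiveRoot ζ e) : ∏ r ∈ Finset.Ico 1 e, (ζ ^ r + 1) = 1 := by
  have hpos : 0 < e := by omega
  have himg : Polynomial.nthRootsFinset e (1 : ℂ) = (Finset.range e).image (ζ ^ ·) := by
    symm
    apply Finset.eq_of_subset_of_card_le
    · intro x hx
      simp only [Finset.mem_image, Finset.mem_range] at hx
      obtain ⟨i, hi, rfl⟩ := hx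
      exact (Polynomial.mem_nthRootsFinset hpos 1).2
        (by rw [← pow_mul, mul_comm, pow_mul, hζ.pow_eq_one, one_pow])
    · rw [hζ.card_nthRootsFinset, Finset.card_image_of_injOn, Finset.card_range]
      intro i hi j hj hij
      exact hζ.pow_inj (Finset.mem_range.1 hi) (Finset.mem_range.1 hj) hij
  have heq := congrArg (Polynomial.eval (-1 : ℂ))
    (Polynomial.X_pow_sub_one_eq_prod hpos hζ)
  rw [himg] at heq
  rw [Finset.prod_image (fun i hi j hj hij =>
    hζ.pow_inj (Finset.mem_range.1 hi) (Finset.mem_range.1 hj) hij)] at heq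
  simp only [Polynomial.eval_sub, Polynomial.eval_pow, Polynomial.eval_X, Polynomial.eval_one,
    Polynomial.eval_prod, Polynomial.eval_sub, Polynomial.eval_C] at heq
  have hsplit : ∏ i ∈ Finset.range e, ((-1 : ℂ) - ζ ^ i)
      = ((-1 : ℂ) - ζ ^ 0) * ∏ i ∈ Finset.Ico 1 e, ((-1 : ℂ) - ζ ^ i) := by
    rw [Finset.range_eq_Ico, ← Finset.prod_Ico_consecutive _ (Nat.zero_le 1) hpos]
    congr 1
    simp
  have key : (-2 : ℂ) = (-2) * ∏ i ∈ Finset.Ico 1 e, ((-1 : ℂ) - ζ ^ i) := by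
    calc (-2 : ℂ) = (-1 : ℂ) ^ e - 1 := by rw [ho.neg_one_pow]; ring
    _ = ∏ i ∈ Finset.range e, ((-1 : ℂ) - ζ ^ i) := by simpa using heq
    _ = ((-1 : ℂ) - ζ ^ 0) * ∏ i ∈ Finset.Ico 1 e, ((-1 : ℂ) - ζ ^ i) := hsplit
    _ = (-2) * ∏ i ∈ Finset.Ico 1 e, ((-1 : ℂ) - ζ ^ i) := by rw [pow_zero]; norm_num
  have heq2 : ∏ i ∈ Finset.Ico 1 e, ((-1 : ℂ) - ζ ^ i) = 1 :=
    (mul_left_cancel₀ (by norm_num : (-2 : ℂ) ≠ 0) (by rw [← key, mul_one])).symm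
  have hconv : ∏ i ∈ Finset.Ico 1 e, ((-1 : ℂ) - ζ ^ i)
      = (-1 : ℂ) ^ (e - 1) * ∏ i ∈ Finset.Ico 1 e, (ζ ^ i + 1) := by
    calc ∏ i ∈ Finset.Ico 1 e, ((-1 : ℂ) - ζ ^ i)
        = ∏ i ∈ Finset.Ico 1 e, ((-1 : ℂ) * (ζ ^ i + 1)) :=
          Finset.prod_congr rfl (fun i _ => by ring)
      _ = (∏ _i ∈ Finset.Ico 1 e, (-1 : ℂ)) * ∏ i ∈ Finset.Ico 1 e, (ζ ^ i + 1) :=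
          Finset.prod_mul_distrib
      _ = (-1 : ℂ) ^ (e - 1) * ∏ i ∈ Finset.Ico 1 e, (ζ ^ i + 1) := by
          rw [Finset.prod_const, Nat.card_Ico]
  have heven : Even (e - 1) := by
    obtain ⟨k, hk⟩ := ho
    exact ⟨k, by omega⟩
  rw [hconv, heven.neg_one_pow, one_mul] at heq2
  exact heq2

lemma cyclotomic_dvd_prod_sub_one (e : ℕ) (he : 1 < e) (ho : Odd e) :
    Polynomial.cyclotomic e ℤ ∣ (∏ r ∈ Finset.Ico 1 e, (Polynomial.X ^ r + 1)) - 1 := by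
  have hpos : 0 < e := by omega
  have hζ := Complex.isPrimitiveRoot_exp e hpos.ne'
  rw [Polynomial.cyclotomic_eq_minpoly hζ hpos]
  apply minpoly.isIntegrallyClosed_dvd (hζ.isIntegral hpos)
  rw [map_sub, map_one, map_prod]
  simp only [map_add, map_pow, Polynomial.aeval_X, map_one]
  rw [prod_one_add_pow e he ho hζ, sub_self]

-- blocks lemma
lemma blocks {R : Type*} [CommRing R] (x : R) (e : ℕ) (he : 0 < e) (hx : x ^ e = 1) :
    ∀ c : ℕ, 0 < c →
      ∏ j ∈ Finset.Ico 1 (c * e), (x ^ j + 1)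
        = 2 ^ (c - 1) * (∏ r ∈ Finset.Ico 1 e, (x ^ r + 1)) ^ c := by
  intro c
  induction c with
  | zero => intro h; omega
  | succ c ih =>
    intro _
    rcases Nat.eq_zero_or_pos c with rfl | hc
    · simp
    have h1 : 1 ≤ c * e := Nat.mul_pos hc he
    have h2 : c * e ≤ (c + 1) * e := by nlinarith
    rw [← Finset.prod_Ico_consecutive _ h1 h2, ih hc]
    have hblk : ∏ j ∈ Finset.Ico (c * e) ((c + 1) * e), (x ^ j + 1)
        = 2 * ∏ r ∈ Finset.Ico 1 e, (x ^ r + 1) := by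
      rw [Finset.prod_Ico_eq_prod_range]
      have hlen : (c + 1) * e - c * e = e := by ring_nf; omega
      rw [hlen]
      have : ∏ i ∈ Finset.range e, (x ^ (c * e + i) + 1)
          = ∏ i ∈ Finset.range e, (x ^ i + 1) :=
        Finset.prod_congr rfl (fun i _ => by
          rw [pow_add, mul_comm c e, pow_mul, hx, one_pow, one_mul])
      rw [this]
      have hsplit : ∏ i ∈ Finset.range e, (x ^ i + 1)
          = (x ^ 0 + 1) * ∏ i ∈ Finset.Ico 1 e, (x ^ i + 1) := by
        rw [Finset.range_eq_Ico, ← Finset.prod_Ico_consecutive _ (Nat.zero_le 1) he]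
        congr 1
        simp
      rw [hsplit, pow_zero]
      ring
    rw [hblk]
    obtain ⟨c', rfl⟩ : ∃ c', c = c' + 1 := ⟨c - 1, by omega⟩
    simp only [Nat.add_sub_cancel]
    ring

theorem prime_of_prod_pow_add_one_modEq (M m : ℕ) (hM : 1 < M) (hm : 2 < m)
    (h : (∏ j ∈ Finset.Icc 1 (m - 1), (M ^ j + 1)) ≡ 1 [MOD (M ^ m - 1) / (M - 1)]) :
    m.Prime := by
  by_contra hnp
  have hMm1 : 1 ≤ M ^ m := Nat.one_le_pow _ _ (by omega)
  have hNsum : (M ^ m - 1) / (M - 1) = ∑ i ∈ Finset.range m, M ^ i := by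
    apply Nat.div_eq_of_eq_mul_right (by omega)
    zify [hMm1, hM.le]
    rw [mul_comm]
    exact (geom_sum_mul (M : ℤ) m).symm
  have hdvdN : ∀ d : ℕ, d ∣ m → d ≠ 1 →
      (((Polynomial.cyclotomic d ℤ).eval (M : ℤ)).natAbs) ∣ (M ^ m - 1) / (M - 1) := by
    intro d hd hd1
    rw [hNsum, ← Int.natCast_dvd_natCast]
    push_cast
    have := Polynomial.eval_dvd (x := (M : ℤ))
      (Polynomial.cyclotomic_dvd_geom_sum_of_dvd ℤ hd hd1)
    simp only [Polynomial.eval_finset_sum, Polynomial.eval_pow, Polynomial.eval_X] at this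
    exact (abs_dvd _ _).mpr this
  have hIcc : Finset.Icc 1 (m - 1) = Finset.Ico 1 m := by
    rw [← Finset.Ico_add_one_right_eq_Icc]
    congr 1
    omega
  rcases Nat.even_or_odd m with hme | hmo
  · -- even case
    have h2 : (2 : ℕ) ∣ m := hme.two_dvd
    have hΦ2 : ((Polynomial.cyclotomic 2 ℤ).eval (M : ℤ)).natAbs = M + 1 := by
      rw [Polynomial.cyclotomic_two]
      simp only [Polynomial.eval_add, Polynomial.eval_X, Polynomial.eval_one]
      rw [show ((M : ℤ) + 1) = ((M + 1 : ℕ) : ℤ) by push_cast; ring, Int.natAbs_natCast]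
    have hdvd : (M + 1) ∣ (M ^ m - 1) / (M - 1) := hΦ2 ▸ hdvdN 2 h2 (by norm_num)
    have hP0 : (M + 1) ∣ ∏ j ∈ Finset.Icc 1 (m - 1), (M ^ j + 1) := by
      have h1mem : (1 : ℕ) ∈ Finset.Icc 1 (m - 1) := by
        simp only [Finset.mem_Icc]
        omega
      have := Finset.dvd_prod_of_mem (fun j => M ^ j + 1) h1mem
      simpa [pow_one] using this
    have hP1 : (∏ j ∈ Finset.Icc 1 (m - 1), (M ^ j + 1)) ≡ 1 [MOD M + 1] :=
      Nat.ModEq.of_dvd hdvd h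
    have h01 : (M + 1) ∣ 1 := by
      have h0 : (∏ j ∈ Finset.Icc 1 (m - 1), (M ^ j + 1)) ≡ 0 [MOD M + 1] :=
        (Nat.modEq_zero_iff_dvd).2 hP0
      exact (Nat.modEq_iff_dvd' (by norm_num)).mp (h0.symm.trans hP1)
    have := Nat.le_of_dvd one_pos h01
    omega
  · -- odd case
    set p := m.minFac with hp_def
    have hp : p.Prime := Nat.minFac_prime (by omega)
    have hpm : p ∣ m := Nat.minFac_dvd m
    set e := m / p with he_def
    have hpe : p * e = m := Nat.mul_div_cancel' hpm
    have hsq : p * p ≤ m := by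
      have := Nat.minFac_sq_le_self (by omega : 0 < m) hnp
      nlinarith [this, sq p]
    have hpe' : p ≤ e := by nlinarith [hpe, hsq, hp.two_le]
    have hpne2 : p ≠ 2 := by
      rintro hp2
      rw [Nat.odd_iff] at hmo
      obtain ⟨k, hk⟩ := hpm
      rw [hp2] at hk
      omega
    have hp3 : 3 ≤ p := by
      have := hp.two_le
      omega
    have he1 : 1 < e := by omega
    have hem : e ∣ m := ⟨p, by rw [mul_comm]; exact hpe.symm⟩
    have heodd : Odd e := by
      rcases Nat.even_or_odd e with hee | hee
      · exfalso
        obtain ⟨k, hk⟩ := hem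
        rw [Nat.odd_iff] at hmo
        rw [Nat.even_iff] at hee
        have : m % 2 = 0 := by
          rw [hk, Nat.mul_mod, hee]
          simp
        omega
      · exact hee
    set Φ := (Polynomial.cyclotomic e ℤ).eval (M : ℤ) with hΦdef
    set n := Φ.natAbs with hn_def
    have hnN : n ∣ (M ^ m - 1) / (M - 1) := hdvdN e hem (by omega)
    have hn1 : 1 < n := by
      have := Polynomial.sub_one_lt_natAbs_cyclotomic_eval (n := e) (q := M) he1 (by omega)
      omega
    have hMe_int : Φ ∣ (M : ℤ) ^ e - 1 := by
      have := Polynomial.eval_dvd (x := (M : ℤ)) (Polynomial.cyclotomic.dvd_X_pow_sub_one e ℤ)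
      simpa using this
    have hMe_mod : (1 : ℕ) ≡ M ^ e [MOD n] := by
      rw [Nat.modEq_iff_dvd]
      push_cast
      exact Int.natAbs_dvd.mpr hMe_int
    have hx : ((M : ZMod n)) ^ e = 1 := by
      have := (ZMod.natCast_eq_natCast_iff _ _ _).mpr hMe_mod
      push_cast at this
      exact this.symm
    have hE_int : Φ ∣ (∏ r ∈ Finset.Ico 1 e, ((M : ℤ) ^ r + 1)) - 1 := by
      have := Polynomial.eval_dvd (x := (M : ℤ)) (cyclotomic_dvd_prod_sub_one e he1 heodd)
      simpa [Polynomial.eval_prod] using this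
    have hEmod : (1 : ℕ) ≡ (∏ r ∈ Finset.Ico 1 e, (M ^ r + 1)) [MOD n] := by
      rw [Nat.modEq_iff_dvd]
      push_cast
      exact Int.natAbs_dvd.mpr hE_int
    have hEz : (∏ r ∈ Finset.Ico 1 e, ((M : ZMod n) ^ r + 1)) = 1 := by
      have := (ZMod.natCast_eq_natCast_iff _ _ _).mpr hEmod
      push_cast at this
      exact this.symm
    have hP1 : (∏ j ∈ Finset.Icc 1 (m - 1), ((M : ZMod n) ^ j + 1)) = 1 := by
      have := (ZMod.natCast_eq_natCast_iff _ _ _).mpr (Nat.ModEq.of_dvd hnN h)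
      push_cast at this
      exact this
    have hPcalc : (∏ j ∈ Finset.Icc 1 (m - 1), ((M : ZMod n) ^ j + 1))
        = 2 ^ (p - 1) * (∏ r ∈ Finset.Ico 1 e, ((M : ZMod n) ^ r + 1)) ^ p := by
      rw [hIcc, ← hpe]
      exact blocks (M : ZMod n) e (by omega) hx p (by omega)
    have h2p1 : ((2 : ZMod n)) ^ (p - 1) = 1 := by
      rw [hEz, one_pow, mul_one] at hPcalc
      rw [← hPcalc, hP1]
    have hdvd2 : n ∣ 2 ^ (p - 1) - 1 := by
      have hcast : ((2 ^ (p - 1) : ℕ) : ZMod n) = ((1 : ℕ) : ZMod n) := by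
        push_cast
        rw [h2p1]
      have := (ZMod.natCast_eq_natCast_iff _ _ _).mp hcast
      exact (Nat.modEq_iff_dvd' (Nat.one_le_pow _ _ (by norm_num))).mp this.symm
    have hp2pos : 4 ≤ 2 ^ (p - 1) := by
      calc (4 : ℕ) = 2 ^ 2 := by norm_num
      _ ≤ 2 ^ (p - 1) := Nat.pow_le_pow_right (by norm_num) (by omega)
    have hnle : n ≤ 2 ^ (p - 1) - 1 := Nat.le_of_dvd (by omega) hdvd2
    have hφ : p - 1 ≤ Nat.totient e := by
      have hq0p : e.minFac.Prime := Nat.minFac_prime (by omega)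
      have hq0m : e.minFac ∣ m := (Nat.minFac_dvd e).trans hem
      have hpq0 : p ≤ e.minFac := Nat.minFac_le_of_dvd hq0p.two_le hq0m
      have h1 : Nat.totient e.minFac ∣ Nat.totient e := Nat.totient_dvd_of_dvd (Nat.minFac_dvd e)
      have h2 : Nat.totient e.minFac = e.minFac - 1 := Nat.totient_prime hq0p
      have h3 : Nat.totient e.minFac ≤ Nat.totient e :=
        Nat.le_of_dvd (Nat.totient_pos.2 (by omega)) h1
      omega
    rcases (by omega : M = 2 ∨ 3 ≤ M) with rfl | hM3
    · -- M = 2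
      have hne : n ∣ 2 ^ e - 1 :=
        (Nat.modEq_iff_dvd' (Nat.one_le_pow _ _ (by norm_num))).mp hMe_mod
      set q := n.minFac with hq_def
      have hqp : q.Prime := Nat.minFac_prime (by omega)
      have hq1 : q ∣ 2 ^ e - 1 := (Nat.minFac_dvd n).trans hne
      have hq2 : q ∣ 2 ^ (p - 1) - 1 := (Nat.minFac_dvd n).trans hdvd2
      have hz1 : ((2 : ℕ) : ZMod q) ^ e = 1 := by
        have h' : (1 : ℕ) ≡ 2 ^ e [MOD q] :=
          (Nat.modEq_iff_dvd' (Nat.one_le_pow _ _ (by norm_num))).mpr hq1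
        have := (ZMod.natCast_eq_natCast_iff _ _ _).mpr h'
        push_cast at this ⊢
        exact this.symm
      have hz2 : ((2 : ℕ) : ZMod q) ^ (p - 1) = 1 := by
        have h' : (1 : ℕ) ≡ 2 ^ (p - 1) [MOD q] :=
          (Nat.modEq_iff_dvd' (Nat.one_le_pow _ _ (by norm_num))).mpr hq2
        have := (ZMod.natCast_eq_natCast_iff _ _ _).mpr h'
        push_cast at this ⊢
        exact this.symm
      have hgcd : Nat.gcd e (p - 1) = 1 := by
        by_contra hg
        have hrp : (Nat.gcd e (p - 1)).minFac.Prime := Nat.minFac_prime hg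
        have hre : (Nat.gcd e (p - 1)).minFac ∣ e :=
          (Nat.minFac_dvd _).trans (Nat.gcd_dvd_left _ _)
        have hrp1 : (Nat.gcd e (p - 1)).minFac ∣ p - 1 :=
          (Nat.minFac_dvd _).trans (Nat.gcd_dvd_right _ _)
        have hrm : (Nat.gcd e (p - 1)).minFac ∣ m := hre.trans hem
        have hge : p ≤ (Nat.gcd e (p - 1)).minFac := Nat.minFac_le_of_dvd hrp.two_le hrm
        have hle : (Nat.gcd e (p - 1)).minFac ≤ p - 1 := Nat.le_of_dvd (by omega) hrp1
        omega
      have hord : orderOf ((2 : ℕ) : ZMod q) ∣ 1 := by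
        rw [← hgcd]
        exact Nat.dvd_gcd (orderOf_dvd_of_pow_eq_one hz1) (orderOf_dvd_of_pow_eq_one hz2)
      have h21 : ((2 : ℕ) : ZMod q) = 1 := orderOf_eq_one_iff.mp (Nat.dvd_one.mp hord)
      have h21' : (2 : ℕ) ≡ 1 [MOD q] := by
        refine (ZMod.natCast_eq_natCast_iff _ _ _).mp ?_
        rw [h21, Nat.cast_one]
      have hqd1 : q ∣ 1 := (Nat.modEq_iff_dvd' (by norm_num)).mp h21'.symm
      have := Nat.le_of_dvd one_pos hqd1
      have := hqp.two_le
      omega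
    · -- M ≥ 3
      have hlow : (M - 1) ^ e.totient < n :=
        Polynomial.sub_one_pow_totient_lt_natAbs_cyclotomic_eval he1 (by omega)
      have h2a : 2 ^ (p - 1) ≤ 2 ^ e.totient := Nat.pow_le_pow_right (by norm_num) hφ
      have h2b : 2 ^ e.totient ≤ (M - 1) ^ e.totient := Nat.pow_le_pow_left (by omega) _
      omega
end

section
/- Let M be a natural number with M > 1. If m is an even natural number with m > 2, then ∏_{j=1}^{m-1} (M^j + 1) is not congruent to 1 modulo (M^m − 1)/(M − 1). (Indeed, writing m = 2w, the number M^w + 1 divides both the modulus and the product, but does not divide 1.) -/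
theorem not_modEq_of_even_gen (M m : ℕ) (hM : 1 < M) (hm : 2 < m) (he : Even m) :
    ¬ (∏ j ∈ Finset.Icc 1 (m - 1), (M ^ j + 1)) ≡ 1 [MOD (M ^ m - 1) / (M - 1)] := by
  obtain ⟨w, rfl⟩ := he
  intro h
  set d := M ^ w + 1 with hd
  have hw : 2 ≤ w := by omega
  have h1 : 1 ≤ M ^ w := Nat.one_le_pow _ _ (by omega)
  have hdvd1 : (M - 1) ∣ (M ^ w - 1) := by
    have := Nat.sub_dvd_pow_sub_pow M 1 w
    simpa using this
  have hmm : M ^ (w + w) - 1 = (M ^ w - 1) * (M ^ w + 1) := by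
    rw [pow_add]
    rcases Nat.exists_eq_add_of_le h1 with ⟨k, hk⟩
    rw [hk]
    have e1 : (1 + k) * (1 + k) = k * k + (2 * k + 1) := by ring
    have e2 : (1 + k - 1) * (1 + k + 1) = k * k + 2 * k := by
      have : 1 + k - 1 = k := by omega
      rw [this]; ring
    omega
  obtain ⟨c, hc⟩ := hdvd1
  have hdvdN : d ∣ (M ^ (w + w) - 1) / (M - 1) := by
    rw [hmm, hc, mul_assoc, Nat.mul_div_cancel_left _ (by omega : 0 < M - 1)]
    exact dvd_mul_left _ _
  have hmem : w ∈ Finset.Icc 1 (w + w - 1) := by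
    simp only [Finset.mem_Icc]; omega
  have hdvdP : d ∣ ∏ j ∈ Finset.Icc 1 (w + w - 1), (M ^ j + 1) :=
    Finset.dvd_prod_of_mem _ hmem
  have h2 : (∏ j ∈ Finset.Icc 1 (w + w - 1), (M ^ j + 1)) ≡ 1 [MOD d] :=
    h.of_dvd hdvdN
  have hP0 : (∏ j ∈ Finset.Icc 1 (w + w - 1), (M ^ j + 1)) % d = 0 :=
    Nat.mod_eq_zero_of_dvd hdvdP
  have hd5 : 5 ≤ d := by
    have h2M : 2 ≤ M := hM
    have : (2:ℕ) ^ 2 ≤ M ^ w :=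
      (Nat.pow_le_pow_left h2M 2).trans (Nat.pow_le_pow_right (by omega) hw)
    norm_num at this
    omega
  have h1d : 1 % d = 1 := Nat.mod_eq_of_lt (by omega)
  unfold Nat.ModEq at h2
  omega
end

section
/- Let M be a natural number with M ≥ 2 and let d be an odd natural number with d > 1. Then ∏_{j=0}^{d-1} (M^j + 1) ≡ 2 (mod Φ_d(M)), where Φ_d(M) is the value of the d-th cyclotomic polynomial at M. -/
open Polynomial

lemma prod_range_pow_add_one_eq_two {ζ : ℂ} {d : ℕ} (hd : 1 < d) (hodd : Odd d)
    (h : IsPrimitiveRoot ζ d) : (∏ j ∈ Finset.range d, (ζ ^ j + 1)) = 2 := by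
  have hpos : 0 < d := by omega
  have key : ∏ j ∈ Finset.range d, (ζ ^ j + 1) = ∏ μ ∈ nthRootsFinset d (1 : ℂ), (μ + 1) := by
    refine Finset.prod_nbij (fun j => ζ ^ j) (fun j hj => ?_) (fun a ha b hb hab => ?_)
      (fun μ hμ => ?_) (fun _ _ => rfl)
    · exact (Polynomial.mem_nthRootsFinset hpos (1 : ℂ)).2 (by rw [← pow_mul, mul_comm, pow_mul, h.pow_eq_one, one_pow])
    · exact h.pow_inj (Finset.mem_range.1 ha) (Finset.mem_range.1 hb) hab
    · haveI : NeZero d := ⟨hpos.ne'⟩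
      obtain ⟨i, hi, rfl⟩ := h.eq_pow_of_pow_eq_one ((Polynomial.mem_nthRootsFinset hpos (1 : ℂ)).1 hμ)
      exact ⟨i, Finset.mem_coe.2 (Finset.mem_range.2 hi), rfl⟩
  have hX := Polynomial.X_pow_sub_one_eq_prod hpos h
  have := congrArg (Polynomial.eval (-1 : ℂ)) hX
  simp only [eval_sub, eval_pow, eval_X, eval_one, eval_prod, eval_sub, eval_C] at this
  rw [hodd.neg_one_pow] at this
  have hprod : ∏ μ ∈ nthRootsFinset d (1 : ℂ), (-1 - μ) = ∏ μ ∈ nthRootsFinset d (1 : ℂ), (-(μ + 1)) := by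
    apply Finset.prod_congr rfl; intros; ring
  have hneg : ∏ μ ∈ nthRootsFinset d (1 : ℂ), (-(μ + 1)) =
      (-1) ^ (nthRootsFinset d (1 : ℂ)).card * ∏ μ ∈ nthRootsFinset d (1 : ℂ), (μ + 1) := by
    rw [show (∏ μ ∈ nthRootsFinset d (1 : ℂ), (-(μ + 1))) =
        ∏ μ ∈ nthRootsFinset d (1 : ℂ), ((-1) * (μ + 1)) from
      Finset.prod_congr rfl (by intros; ring), Finset.prod_mul_distrib, Finset.prod_const]
  rw [hprod, hneg, h.card_nthRootsFinset, hodd.neg_one_pow] at this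
  rw [key]
  linear_combination this

theorem prod_pow_add_one_modEq_two (M d : ℕ) (hM : 2 ≤ M) (hd : 1 < d) (hodd : Odd d) :
    (∏ j ∈ Finset.range d, ((M : ℤ) ^ j + 1)) ≡ 2 [ZMOD (cyclotomic d ℤ).eval (M : ℤ)] := by
  have hpos : 0 < d := by omega
  set ζ : ℂ := Complex.exp (2 * Real.pi * Complex.I / d)
  have hζ : IsPrimitiveRoot ζ d := Complex.isPrimitiveRoot_exp d hpos.ne'
  have hdvd : cyclotomic d ℤ ∣ (∏ j ∈ Finset.range d, (X ^ j + 1)) - C 2 := by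
    rw [cyclotomic_eq_minpoly hζ hpos]
    apply minpoly.isIntegrallyClosed_dvd (hζ.isIntegral hpos)
    have : (Polynomial.aeval ζ) ((∏ j ∈ Finset.range d, (X ^ j + 1 : ℤ[X])) - C 2)
        = (∏ j ∈ Finset.range d, (ζ ^ j + 1)) - 2 := by
      simp [map_prod]
      simp [map_ofNat]
    rw [this, prod_range_pow_add_one_eq_two hd hodd hζ, sub_self]
  obtain ⟨q, hq⟩ := hdvd
  have := congrArg (Polynomial.eval (M : ℤ)) hq
  simp only [eval_sub, eval_prod, eval_add, eval_pow, eval_X, eval_C, eval_mul, eval_one] at this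
  exact (Int.modEq_iff_dvd.2 ⟨-q.eval (M : ℤ), by linear_combination -this⟩)
end

section
/- Let m be an odd natural number with m = c·d where c > 1 and d > 1. If ∏_{j=1}^{m-1} (2^j + 1) ≡ 1 (mod 2^m − 1), then 2^{c-1} ≡ 1 (mod Φ_d(2)), where Φ_d(2) is the value of the d-th cyclotomic polynomial at 2. -/
open Polynomial

private lemma modEq_prod_aux {s : Finset ℕ} {f g : ℕ → ℤ} {n : ℤ}
    (h : ∀ i ∈ s, f i ≡ g i [ZMOD n]) :
    (∏ i ∈ s, f i) ≡ ∏ i ∈ s, g i [ZMOD n] := by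
  classical
  induction s using Finset.induction with
  | empty => rfl
  | @insert x s hx ih =>
    simp only [Finset.prod_insert hx]
    exact (h _ (Finset.mem_insert_self _ _)).mul
      (ih fun i hi => h i (Finset.mem_insert_of_mem hi))

private lemma cyclo_dvd_prod_sub_two {d : ℕ} (hd : 0 < d) (hodd : Odd d) :
    ((cyclotomic d ℤ).eval 2) ∣ (∏ r ∈ Finset.range d, ((2:ℤ) ^ r + 1)) - 2 := by
  set ζ : ℂ := Complex.exp (2 * Real.pi * Complex.I / d) with hζdef
  have hζ : IsPrimitiveRoot ζ d := Complex.isPrimitiveRoot_exp d hd.ne'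
  have hint : IsIntegral ℤ ζ := hζ.isIntegral hd
  have hprod : ∏ i ∈ Finset.range d, (ζ ^ i + 1) = 2 := by
    have h1 := congrArg (Polynomial.eval (-1 : ℂ)) (X_pow_sub_C_eq_prod hζ hd (one_pow d))
    simp only [eval_sub, eval_pow, eval_X, eval_C, eval_prod, mul_one] at h1
    rw [hodd.neg_one_pow] at h1
    have h2 : ∀ i ∈ Finset.range d, (-1 : ℂ) - ζ ^ i = (-1) * (ζ ^ i + 1) := by
      intro i _; ring
    rw [Finset.prod_congr rfl h2, Finset.prod_mul_distrib, Finset.prod_const,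
      Finset.card_range, hodd.neg_one_pow] at h1
    have := h1.symm
    linear_combination (-1 : ℂ) * this
  have hdvd : cyclotomic d ℤ ∣ (∏ r ∈ Finset.range d, (X ^ r + 1)) - C 2 := by
    rw [cyclotomic_eq_minpoly hζ hd]
    apply minpoly.isIntegrallyClosed_dvd hint
    simp only [map_sub, map_prod, map_add, map_pow, aeval_X, map_one, aeval_C]
    rw [hprod]
    simp
  have := eval_dvd (x := (2:ℤ)) hdvd
  simpa [eval_prod] using this

theorem two_pow_modEq_one_of_prod (m c d : ℕ) (hodd : Odd m) (hm : m = c * d)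
    (hc : 1 < c) (hd : 1 < d)
    (h : (∏ j ∈ Finset.Icc 1 (m - 1), (2 ^ j + 1)) ≡ 1 [MOD 2 ^ m - 1]) :
    (2 : ℤ) ^ (c - 1) ≡ 1 [ZMOD (cyclotomic d ℤ).eval 2] := by
  set q : ℤ := (cyclotomic d ℤ).eval 2 with hq
  have hd0 : 0 < d := by omega
  have hdodd : Odd d := (Nat.odd_mul.mp (hm ▸ hodd)).2
  -- q divides 2^d - 1
  have hq2d : q ∣ (2:ℤ) ^ d - 1 := by
    have := eval_dvd (x := (2:ℤ)) (cyclotomic.dvd_X_pow_sub_one d ℤ)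
    simpa using this
  -- q divides 2^m - 1
  have hqm : q ∣ (2:ℤ) ^ m - 1 := by
    refine hq2d.trans ?_
    have : ((2:ℤ) ^ d) - 1 ∣ ((2:ℤ) ^ d) ^ c - 1 ^ c := sub_dvd_pow_sub_pow _ _ c
    simpa [← pow_mul, hm, mul_comm d c] using this
  -- q is odd
  have h2q : ¬ (2:ℤ) ∣ q := by
    intro h2
    have hdvd : (2:ℤ) ∣ 2 ^ d - 1 := h2.trans hq2d
    have : (2:ℤ) ∣ 2 ^ d := dvd_pow_self 2 hd0.ne'
    omega
  -- hypothesis as Int.ModEq mod q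
  have hP : ((∏ j ∈ Finset.Icc 1 (m - 1), ((2:ℤ) ^ j + 1))) ≡ 1 [ZMOD q] := by
    have h' : ((∏ j ∈ Finset.Icc 1 (m - 1), (2 ^ j + 1) : ℕ) : ℤ)
        ≡ ((1 : ℕ) : ℤ) [ZMOD ((2 ^ m - 1 : ℕ) : ℤ)] := Int.natCast_modEq_iff.mpr h
    have hcast : ((2 ^ m - 1 : ℕ) : ℤ) = (2:ℤ) ^ m - 1 := by
      have : 1 ≤ 2 ^ m := Nat.one_le_two_pow
      push_cast [this]; ring
    rw [hcast] at h'
    have h'' : ((∏ j ∈ Finset.Icc 1 (m - 1), (2 ^ j + 1) : ℕ) : ℤ)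
        = ∏ j ∈ Finset.Icc 1 (m - 1), ((2:ℤ) ^ j + 1) := by push_cast; rfl
    rw [h''] at h'
    exact (Int.ModEq.of_dvd hqm (by simpa using h'))
  -- 2^(k*d) ≡ 1 mod q
  have hpow : ∀ k : ℕ, ((2:ℤ) ^ (k * d)) ≡ 1 [ZMOD q] := by
    intro k
    have : (2:ℤ) ^ d - 1 ∣ ((2:ℤ) ^ d) ^ k - 1 ^ k := sub_dvd_pow_sub_pow _ _ k
    have h1 : q ∣ ((2:ℤ) ^ d) ^ k - 1 := hq2d.trans (by simpa using this)
    rw [← pow_mul, mul_comm d k] at h1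
    exact (Int.modEq_iff_dvd.mpr (by simpa using h1.neg_right.neg_right)).symm.trans (by rfl)
  -- the basic cyclotomic product congruence
  have hA : (∏ r ∈ Finset.range d, ((2:ℤ) ^ r + 1)) ≡ 2 [ZMOD q] :=
    (Int.modEq_iff_dvd.mpr (by simpa using (cyclo_dvd_prod_sub_two hd0 hdodd).neg_right.neg_right)).symm
  -- product over range (k*d)
  have hstep : ∀ k : ℕ, (∏ j ∈ Finset.range (k * d), ((2:ℤ) ^ j + 1)) ≡ 2 ^ k [ZMOD q] := by
    intro k
    induction k with
    | zero => simp
    | succ k ih =>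
      have hsplit := Finset.prod_range_add (fun j => ((2:ℤ) ^ j + 1)) (k * d) d
      have hinner : (∏ i ∈ Finset.range d, ((2:ℤ) ^ (k * d + i) + 1))
          ≡ ∏ i ∈ Finset.range d, ((2:ℤ) ^ i + 1) [ZMOD q] := by
        apply modEq_prod_aux
        intro i _
        have := ((hpow k).mul (Int.ModEq.refl ((2:ℤ) ^ i))).add_right 1
        simpa [pow_add] using this
      have hk1 : (k + 1) * d = k * d + d := by ring
      rw [hk1, hsplit]
      calc (∏ j ∈ Finset.range (k * d), ((2:ℤ) ^ j + 1)) *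
            ∏ i ∈ Finset.range d, ((2:ℤ) ^ (k * d + i) + 1)
          ≡ 2 ^ k * (∏ i ∈ Finset.range d, ((2:ℤ) ^ i + 1)) [ZMOD q] := ih.mul hinner
        _ ≡ 2 ^ k * 2 [ZMOD q] := (Int.ModEq.refl _).mul hA
        _ = 2 ^ (k + 1) := by rw [pow_succ]
  -- split off j = 0
  have hm0 : 0 < m := hm ▸ Nat.mul_pos (by omega) (by omega)
  have hIco : Finset.Ico 1 m = Finset.Icc 1 (m - 1) := by
    rw [← Finset.Ico_add_one_right_eq_Icc]
    congr 1
    omega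
  have hsplit0 : (∏ j ∈ Finset.range m, ((2:ℤ) ^ j + 1))
      = 2 * ∏ j ∈ Finset.Icc 1 (m - 1), ((2:ℤ) ^ j + 1) := by
    rw [Finset.range_eq_Ico, Finset.prod_eq_prod_Ico_succ_bot hm0, hIco]
    norm_num
  have hmain : (2:ℤ) * ∏ j ∈ Finset.Icc 1 (m - 1), ((2:ℤ) ^ j + 1) ≡ 2 ^ c [ZMOD q] := by
    rw [← hsplit0]
    have := hstep c
    rwa [← hm] at this
  have h2c : (2:ℤ) ^ c ≡ 2 * 1 [ZMOD q] := hmain.symm.trans (hP.mul_left 2)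
  have hcpow : (2:ℤ) ^ c = 2 * 2 ^ (c - 1) := by
    rw [← pow_succ']
    congr 1
    omega
  rw [hcpow] at h2c
  have hdd : q ∣ 2 * (1 - 2 ^ (c - 1)) := by
    have := h2c.dvd
    convert this using 1
    ring
  have hoddq : Odd q := Int.not_even_iff_odd.mp fun he => h2q he.two_dvd
  have hcop : IsCoprime q (2:ℤ) := by
    rw [Int.isCoprime_iff_gcd_eq_one]
    simpa [Int.gcd] using (Int.natAbs_odd.mpr hoddq).coprime_two_right
  have hfin : q ∣ 1 - 2 ^ (c - 1) := hcop.dvd_of_dvd_mul_left hdd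
  exact Int.modEq_iff_dvd.mpr hfin
end

section
/- Let m be an odd composite natural number, let c be the least prime divisor of m, and set d = m/c. Then 2^{c-1} is not congruent to 1 modulo Φ_d(2), where Φ_d(2) is the value of the d-th cyclotomic polynomial at 2. (Indeed, the multiplicative order of 2 modulo Φ_d(2) divides d, no prime divisor of d divides c − 1, and Φ_d(2) > 1.) -/
open Polynomial

theorem two_pow_not_modEq_one (m : ℕ) (hodd : Odd m) (hm : 1 < m) (hcomp : ¬ m.Prime) :
    ¬ (2 : ℤ) ^ (m.minFac - 1) ≡ 1 [ZMOD (cyclotomic (m / m.minFac) ℤ).eval 2] := by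
  intro h
  set c := m.minFac with hc
  set d := m / c with hdd
  set N : ℤ := (cyclotomic d ℤ).eval 2 with hN
  have hm0 : m ≠ 0 := by omega
  have hcd : c * d = m := Nat.mul_div_cancel' (Nat.minFac_dvd m)
  have hcprime : c.Prime := Nat.minFac_prime (by omega)
  have hc3 : 3 ≤ c := by
    have hne2 : c ≠ 2 := by
      intro h2
      have : 2 ∣ m := h2 ▸ Nat.minFac_dvd m
      exact (Nat.not_even_iff_odd.mpr hodd) ((even_iff_two_dvd).mpr this)
    have := hcprime.two_le
    omega
  have hd1 : 1 < d := by
    rcases Nat.lt_or_ge d 2 with h | h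
    · interval_cases d
      · omega
      · exact absurd (hcd ▸ (by simpa using hcprime)) hcomp
    · exact h
  -- gcd (c-1) d = 1
  have hgcd : Nat.gcd (c - 1) d = 1 := by
    by_contra hg
    have hgpos : 0 < Nat.gcd (c - 1) d := Nat.gcd_pos_of_pos_right _ (by omega)
    set g := Nat.gcd (c - 1) d
    have hp : g.minFac.Prime := Nat.minFac_prime hg
    have hpd : g.minFac ∣ d := (Nat.minFac_dvd g).trans (Nat.gcd_dvd_right _ _)
    have hpc1 : g.minFac ∣ c - 1 := (Nat.minFac_dvd g).trans (Nat.gcd_dvd_left _ _)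
    have hpm : g.minFac ∣ m := hpd.trans (hcd ▸ Dvd.intro_left c rfl)
    have h1 : c ≤ g.minFac := Nat.minFac_le_of_dvd hp.two_le hpm
    have h2 : g.minFac ≤ c - 1 := Nat.le_of_dvd (by omega) hpc1
    omega
  set n := N.natAbs with hn
  have hn2 : 1 < n := by
    have := Polynomial.sub_one_lt_natAbs_cyclotomic_eval (q := 2) hd1 (by norm_num)
    simpa using this
  -- 2^d ≡ 1 mod N
  have hdvd : N ∣ (2 : ℤ) ^ d - 1 := by
    have := Polynomial.cyclotomic.dvd_X_pow_sub_one d ℤ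
    have := Polynomial.eval_dvd (x := (2 : ℤ)) this
    simpa using this
  have key : ∀ k : ℕ, (2 : ℤ) ^ k ≡ 1 [ZMOD N] → ((2 : ZMod n) ^ k = 1) := by
    intro k hk
    have : (n : ℤ) ∣ 1 - 2 ^ k := Int.natAbs_dvd.2 (Int.ModEq.dvd hk)
    have : ((2 : ℤ) : ZMod n) ^ k = ((1 : ℤ) : ZMod n) := by
      rw [← Int.cast_pow, ZMod.intCast_eq_intCast_iff]
      exact Int.modEq_iff_dvd.2 this
    simpa using this
  have h1 : (2 : ZMod n) ^ (c - 1) = 1 := key _ h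
  have h2 : (2 : ZMod n) ^ d = 1 := key _ (Int.modEq_iff_dvd.2 (by
    have : N ∣ -((2:ℤ) ^ d - 1) := dvd_neg.mpr hdvd
    simpa [neg_sub] using this))
  have h3 : (2 : ZMod n) = 1 := by
    have := (pow_gcd_eq_one (a := (2 : ZMod n))).2 ⟨h1, h2⟩
    rwa [hgcd, pow_one] at this
  have hcast : ((1 : ℕ) : ZMod n) = ((2 : ℕ) : ZMod n) := by push_cast; exact h3.symm
  have hdvd1 : n ∣ 1 := by
    simpa using (Nat.modEq_iff_dvd' (by norm_num)).1 ((ZMod.natCast_eq_natCast_iff _ _ _).1 hcast)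
  have := Nat.le_of_dvd one_pos hdvd1
  omega
end

section
/- Let M and c be natural numbers with M > 2 and c ≥ 2, and let d > 2 be a natural number each of whose prime divisors is at least c. Then Φ_d(M) > 2^{c-1}; in particular, 2^{c-1} is not congruent to 1 modulo Φ_d(M). -/
open Polynomial

theorem cyclotomic_eval_gt_two_pow (M c d : ℕ) (hM : 2 < M) (hc : 2 ≤ c) (hd : 2 < d)
    (hp : ∀ p : ℕ, p.Prime → p ∣ d → c ≤ p) :
    (cyclotomic d ℤ).eval (M : ℤ) > 2 ^ (c - 1) ∧
      ¬ (2 : ℤ) ^ (c - 1) ≡ 1 [ZMOD (cyclotomic d ℤ).eval (M : ℤ)] := by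
  obtain ⟨p, pp, pd⟩ := Nat.exists_prime_and_dvd (by omega : d ≠ 1)
  have hcp := hp p pp pd
  have htot : c - 1 ≤ Nat.totient d := by
    have h1 : Nat.totient p ∣ Nat.totient d := Nat.totient_dvd_of_dvd pd
    have h2 : Nat.totient p = p - 1 := Nat.totient_prime pp
    have h3 : 0 < Nat.totient d := Nat.totient_pos.2 (by omega)
    have := Nat.le_of_dvd h3 h1
    omega
  have key : (2 : ℕ) ^ (c - 1) < ((cyclotomic d ℤ).eval (M : ℤ)).natAbs := by
    calc (2:ℕ) ^ (c-1) ≤ 2 ^ Nat.totient d := Nat.pow_le_pow_right (by norm_num) htot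
      _ ≤ (M - 1) ^ Nat.totient d := Nat.pow_le_pow_left (by omega) _
      _ < _ := sub_one_pow_totient_lt_natAbs_cyclotomic_eval (by omega) (by omega)
  have hpos : 0 < (cyclotomic d ℤ).eval (M : ℤ) :=
    cyclotomic_pos (by omega) _
  have habs : ((cyclotomic d ℤ).eval (M : ℤ)).natAbs = (cyclotomic d ℤ).eval (M : ℤ) :=
    Int.natAbs_of_nonneg hpos.le
  have h2 : (2 : ℤ) ^ (c - 1) < (cyclotomic d ℤ).eval (M : ℤ) := by
    rw [← habs]
    exact_mod_cast key
  refine ⟨h2, fun h => ?_⟩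
  have hdvd : (cyclotomic d ℤ).eval (M : ℤ) ∣ (2 : ℤ) ^ (c - 1) - 1 :=
    Int.ModEq.dvd h.symm
  have hge : (2 : ℤ) ^ (c - 1) - 1 > 0 := by
    have : (2:ℤ)^(c-1) ≥ 2^1 := pow_le_pow_right₀ (by norm_num) (by omega)
    omega
  have := Int.le_of_dvd hge hdvd
  omega
end
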